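/- arXiv:2005.06202 — 2 statements merged into one kernel-verified Lean document; each statement's English description precedes it below -/
import Mathlib

section
/- Let (G, w) be a weighted graph on n vertices, where w assigns a nonzero field element to each edge, and let A(G,w) be its adjacency matrix (with entry w(uv) in positions (u,v) and (v,u) for each edge uv, and 0 elsewhere). Then the characteristic polynomial φ(G,w;λ) = det(λI − A(G,w)) = Σ_{k=0}^{n} a_{n−k} λ^k has coefficients a_{n−k} = Σ_{B ∈ B_k(G)} (−1)^{κ(B)} 2^{c(B)} w(B) w(B₂), where B_k(G) is the set of elementary subgraphs of G of order k, κ(B) is the number of connected components of B, c(B) is the number of cycles in B, B₂ is the set of isolated edges of B, and w(B) = Π_{e ∈ E(B)} w(e). -/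
open SimpleGraph

/-- The degree of a vertex in a subgraph. -/
noncomputable def subDeg {V : Type*} {G : SimpleGraph V} (B : G.Subgraph) (v : V) : ℕ :=
  (B.neighborSet v).ncard

/-- An elementary subgraph: every vertex has degree `1` or `2` and adjacent vertices have
equal degrees; equivalently, every connected component is a single edge or a cycle. -/
def IsElementarySubgraph {V : Type*} {G : SimpleGraph V} (B : G.Subgraph) : Prop :=
  (∀ v ∈ B.verts, subDeg B v = 1 ∨ subDeg B v = 2) ∧
    ∀ u v, B.Adj u v → subDeg B u = subDeg B v

/-- `κ(B)`: the number of connected components of a subgraph. -/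
noncomputable def numComponents {V : Type*} {G : SimpleGraph V} (B : G.Subgraph) : ℕ :=
  Nat.card B.coe.ConnectedComponent

/-- `c(B)`: the number of connected components of a subgraph that are cycles, i.e. in
which every vertex has degree `2`. -/
noncomputable def numCycles {V : Type*} {G : SimpleGraph V} (B : G.Subgraph) : ℕ :=
  Nat.card {C : B.coe.ConnectedComponent |
    ∀ v : B.verts, B.coe.connectedComponentMk v = C → subDeg B ↑v = 2}

/-- `w(B)`: the product of the weights of the edges of a subgraph. -/
noncomputable def subgraphWeight {V : Type*} {F : Type*} [Field F] {G : SimpleGraph V}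
    (w : Sym2 V → F) (B : G.Subgraph) : F :=
  ∏ᶠ e ∈ B.edgeSet, w e

/-- `w(B₂)`: the product of the weights of the isolated edges of a subgraph (the edges
both of whose endpoints have degree `1`). -/
noncomputable def isolatedEdgesWeight {V : Type*} {F : Type*} [Field F]
    {G : SimpleGraph V} (w : Sym2 V → F) (B : G.Subgraph) : F :=
  ∏ᶠ e ∈ {e ∈ B.edgeSet | ∀ x ∈ e, subDeg B x = 1}, w e

set_option linter.unusedSectionVars false

namespace SachsAux

open Equiv Equiv.Perm Finset

variable {V : Type*} [Fintype V] [DecidableEq V] {G : SimpleGraph V}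

/-- Compatibility of a permutation with a subgraph: `σ` fixes everything outside,
moves each vertex of the subgraph to a neighbor, and has no `2`-cycles inside
cyclic components. -/
def Fib (B : G.Subgraph) (σ : Perm V) : Prop :=
  (∀ v, v ∉ B.verts → σ v = v) ∧ (∀ v ∈ B.verts, B.Adj v (σ v)) ∧
    ∀ v ∈ B.verts, subDeg B v = 2 → σ (σ v) ≠ v

variable {B : G.Subgraph} {σ τ : Perm V}

lemma Fib.fix (h : Fib B σ) {v : V} (hv : v ∉ B.verts) : σ v = v := h.1 v hv

lemma Fib.adj (h : Fib B σ) {v : V} (hv : v ∈ B.verts) : B.Adj v (σ v) := h.2.1 v hv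

lemma Fib.no2 (h : Fib B σ) {v : V} (hv : v ∈ B.verts) (hd : subDeg B v = 2) :
    σ (σ v) ≠ v := h.2.2 v hv hd

lemma Fib.mem_of_mem (h : Fib B σ) {v : V} (hv : v ∈ B.verts) : σ v ∈ B.verts :=
  (h.adj hv).snd_mem

lemma Fib.ne (h : Fib B σ) {v : V} (hv : v ∈ B.verts) : σ v ≠ v :=
  fun he => (h.adj hv).ne (he.symm)

lemma Fib.mem_iff (h : Fib B σ) {v : V} : v ∈ B.verts ↔ σ v ≠ v :=
  ⟨fun hv => h.ne hv, fun hv => by by_contra hc; exact hv (h.fix hc)⟩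

lemma Fib.inv (h : Fib B σ) : Fib B σ⁻¹ := by
  refine ⟨fun v hv => ?_, fun v hv => ?_, fun v hv hd => ?_⟩
  · have h1 : σ⁻¹ v = σ⁻¹ (σ v) := by rw [h.fix hv]
    simpa using h1
  · have hu : σ⁻¹ v ∈ B.verts := by
      by_contra hc
      have : σ (σ⁻¹ v) = σ⁻¹ v := by rw [h.fix hc]
      simp only [show σ (σ⁻¹ v) = v from σ.apply_symm_apply v] at this
      exact hc (this ▸ hv)
    have := h.adj hu
    rw [show σ (σ⁻¹ v) = v from σ.apply_symm_apply v] at this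
    exact this.symm
  · intro hc
    apply h.no2 hv hd
    have : σ (σ (σ⁻¹ (σ⁻¹ v))) = σ (σ v) := by rw [hc]
    simpa using this.symm

lemma Fib.inv_mem (h : Fib B σ) {v : V} (hv : v ∈ B.verts) : σ⁻¹ v ∈ B.verts :=
  h.inv.mem_of_mem hv

lemma Fib.adj_inv (h : Fib B σ) {v : V} (hv : v ∈ B.verts) : B.Adj v (σ⁻¹ v) :=
  h.inv.adj hv

/-- For an elementary subgraph, the neighbor set of each vertex is `{σ v, σ⁻¹ v}`. -/
lemma Fib.neighborSet_eq (hB : IsElementarySubgraph B) (h : Fib B σ) {v : V}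
    (hv : v ∈ B.verts) : B.neighborSet v = {σ v, σ⁻¹ v} := by
  have h1 : σ v ∈ B.neighborSet v := h.adj hv
  have h2 : σ⁻¹ v ∈ B.neighborSet v := h.adj_inv hv
  rcases hB.1 v hv with hd | hd
  · obtain ⟨a, ha⟩ := Set.ncard_eq_one.mp hd
    rw [ha] at h1 h2 ⊢
    simp only [Set.mem_singleton_iff] at h1 h2
    rw [h1, h2]; simp
  · have hne : σ v ≠ σ⁻¹ v := by
      intro hc
      apply h.no2 hv hd
      conv_lhs => rw [hc]
      exact σ.apply_symm_apply v
    have hsub : ({σ v, σ⁻¹ v} : Set V) ⊆ B.neighborSet v := by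
      intro x hx; rcases hx with rfl | rfl
      · exact h1
      · exact h2
    refine (Set.eq_of_subset_of_ncard_le hsub ?_ (Set.toFinite _)).symm
    rw [Set.ncard_pair hne]
    exact le_of_eq hd

lemma Fib.deg_two_iff (hB : IsElementarySubgraph B) (h : Fib B σ) {v : V}
    (hv : v ∈ B.verts) : subDeg B v = 2 ↔ σ (σ v) ≠ v := by
  constructor
  · exact h.no2 hv
  · intro hne
    rcases hB.1 v hv with hd | hd
    · exfalso
      obtain ⟨a, ha⟩ := Set.ncard_eq_one.mp hd
      have h1 : σ v ∈ B.neighborSet v := h.adj hv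
      have h2 : σ⁻¹ v ∈ B.neighborSet v := h.adj_inv hv
      rw [ha] at h1 h2
      simp only [Set.mem_singleton_iff] at h1 h2
      apply hne
      conv_lhs => rw [h1, ← h2]
      exact σ.apply_symm_apply v
    · exact hd

lemma Fib.deg_one_iff (hB : IsElementarySubgraph B) (h : Fib B σ) {v : V}
    (hv : v ∈ B.verts) : subDeg B v = 1 ↔ σ (σ v) = v := by
  have h2 := h.deg_two_iff hB hv
  constructor
  · intro h1
    by_contra hc
    have := h2.mpr hc
    omega
  · intro hfix
    rcases hB.1 v hv with hd | hd
    · exact hd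
    · exact absurd hfix (h2.mp hd)

lemma Fib.agree_step (hB : IsElementarySubgraph B) (hσ : Fib B σ) (hτ : Fib B τ) {x : V}
    (hx : x ∈ B.verts) (h : τ x = σ x) : τ (σ x) = σ (σ x) := by
  set y := σ x with hy
  have hyv : y ∈ B.verts := hσ.mem_of_mem hx
  rcases hB.1 y hyv with hd | hd
  · obtain ⟨a, ha⟩ := Set.ncard_eq_one.mp hd
    have h1 : σ y ∈ B.neighborSet y := hσ.adj hyv
    have h2 : τ y ∈ B.neighborSet y := hτ.adj hyv
    rw [ha] at h1 h2
    simp only [Set.mem_singleton_iff] at h1 h2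
    rw [h1, h2]
  · have hmem : τ y ∈ B.neighborSet y := hτ.adj hyv
    rw [hσ.neighborSet_eq hB hyv] at hmem
    rcases hmem with hc | hc
    · exact hc
    · exfalso
      have hxy : σ⁻¹ y = x := by rw [hy]; simp
      rw [hxy] at hc
      apply hτ.no2 hyv hd
      rw [hc, h]

/-- Determination: two compatible permutations agreeing at a vertex agree along the
forward orbit. -/
lemma Fib.agree (hB : IsElementarySubgraph B) (hσ : Fib B σ) (hτ : Fib B τ) {v : V}
    (hv : v ∈ B.verts) (h : τ v = σ v) : ∀ n : ℕ, τ ((σ ^ n) v) = σ ((σ ^ n) v) := by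
  intro n
  induction n with
  | zero => simpa using h
  | succ n ih =>
    have hmem : (σ ^ n) v ∈ B.verts := by
      clear ih
      induction n with
      | zero => simpa using hv
      | succ n ih => rw [pow_succ', Equiv.Perm.mul_apply]; exact hσ.mem_of_mem ih
    rw [pow_succ', Equiv.Perm.mul_apply]
    exact Fib.agree_step hB hσ hτ hmem ih

/-- The subgraph associated with a permutation: edges `{i, σ i}`. -/
def perm2sub (G : SimpleGraph V) (σ : Perm V) : G.Subgraph where
  verts := ↑σ.support
  Adj u v := G.Adj u v ∧ (σ u = v ∨ σ v = u)
  adj_sub h := h.1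
  edge_vert {u v} h := by
    simp only [Finset.coe_sort_coe, Finset.mem_coe, Equiv.Perm.mem_support]
    rcases h.2 with hc | hc
    · intro he; exact h.1.ne (he.symm.trans hc)
    · intro he
      exact h.1.ne' (σ.injective (hc.trans he.symm))
  symm := by
    constructor
    intro u v h
    exact ⟨h.1.symm, h.2.symm⟩

variable {σ : Perm V}

lemma perm2sub_verts : (perm2sub G σ).verts = ↑σ.support := rfl

lemma perm2sub_adj {u v : V} :
    (perm2sub G σ).Adj u v ↔ G.Adj u v ∧ (σ u = v ∨ σ v = u) := Iff.rfl

/-- Hypothesis that a permutation moves each moved point to a `G`-neighbor. -/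
def MovesAdj (G : SimpleGraph V) (σ : Perm V) : Prop := ∀ i ∈ σ.support, G.Adj (σ i) i

lemma inv_mem_support {v : V} (hv : v ∈ σ.support) : σ⁻¹ v ∈ σ.support := by
  simp only [Equiv.Perm.mem_support] at hv ⊢
  intro he
  apply hv
  have h2 : v = σ⁻¹ v := (σ.apply_symm_apply v).symm.trans he
  rw [h2]
  exact he

lemma MovesAdj.neighborSet_eq (h : MovesAdj G σ) {v : V} (hv : v ∈ σ.support) :
    (perm2sub G σ).neighborSet v = {σ v, σ⁻¹ v} := by
  ext u
  simp only [SimpleGraph.Subgraph.mem_neighborSet, perm2sub_adj, Set.mem_insert_iff,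
    Set.mem_singleton_iff]
  constructor
  · rintro ⟨hadj, rfl | hc2⟩
    · exact Or.inl rfl
    · right; rw [← hc2]; simp
  · rintro (rfl | rfl)
    · exact ⟨(h v hv).symm, Or.inl rfl⟩
    · refine ⟨?_, Or.inr (σ.apply_symm_apply v)⟩
      have := h _ (inv_mem_support hv)
      simpa using this
    
lemma MovesAdj.subDeg_eq (h : MovesAdj G σ) {v : V} (hv : v ∈ σ.support) :
    subDeg (perm2sub G σ) v = if σ (σ v) = v then 1 else 2 := by
  unfold subDeg
  rw [h.neighborSet_eq hv]
  by_cases hc : σ (σ v) = v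
  · have heq : σ v = σ⁻¹ v := by apply σ.injective; simp [hc]
    rw [if_pos hc, heq, Set.pair_eq_singleton, Set.ncard_singleton]
  · have hne : σ v ≠ σ⁻¹ v := by
      intro he; apply hc; conv_lhs => rw [he]
      simp
    rw [if_neg hc, Set.ncard_pair hne]

lemma MovesAdj.fib (h : MovesAdj G σ) : Fib (perm2sub G σ) σ := by
  refine ⟨fun v hv => ?_, fun v hv => ?_, fun v hv hd => ?_⟩
  · simp only [perm2sub_verts, Finset.coe_sort_coe, Finset.mem_coe,
      Equiv.Perm.mem_support, not_not] at hv
    exact hv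
  · simp only [perm2sub_verts, Finset.coe_sort_coe, Finset.mem_coe] at hv
    exact ⟨(h v hv).symm, Or.inl rfl⟩
  · intro hc
    have hvs : v ∈ σ.support := hv
    rw [h.subDeg_eq hvs, if_pos hc] at hd
    omega

lemma MovesAdj.elementary (h : MovesAdj G σ) : IsElementarySubgraph (perm2sub G σ) := by
  constructor
  · intro v hv
    rw [h.subDeg_eq hv]
    split <;> simp
  · intro u v huv
    have hu : u ∈ σ.support := (perm2sub G σ).edge_vert huv
    have hv : v ∈ σ.support := (perm2sub G σ).edge_vert huv.symm
    rw [h.subDeg_eq hu, h.subDeg_eq hv]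
    rcases huv.2 with hc | hc
    · subst hc
      have heq : σ (σ u) = u ↔ σ (σ (σ u)) = σ u := by
        constructor
        · intro h1; rw [h1]
        · intro h1; exact σ.injective h1
      simp only [heq]
    · subst hc
      have heq : σ (σ (σ v)) = σ v ↔ σ (σ v) = v := by
        constructor
        · intro h1; exact σ.injective h1
        · intro h1; rw [h1]
      simp only [heq]

/-- A permutation compatible with an elementary subgraph `B` has `perm2sub σ = B`. -/
lemma Fib.perm2sub_eq (hB : IsElementarySubgraph B) (h : Fib B σ) : perm2sub G σ = B := by
  have hverts : (perm2sub G σ).verts = B.verts := by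
    rw [perm2sub_verts]
    ext v
    simp only [Finset.coe_sort_coe, Finset.mem_coe, Equiv.Perm.mem_support]
    exact (h.mem_iff).symm
  apply SimpleGraph.Subgraph.ext hverts
  ext u v
  rw [perm2sub_adj]
  constructor
  · rintro ⟨hadj, rfl | hc⟩
    · have hu : u ∈ B.verts := h.mem_iff.mpr (fun he => hadj.ne he.symm)
      exact h.adj hu
    · have hv : v ∈ B.verts := h.mem_iff.mpr (fun he => hadj.ne (hc.symm.trans he))
      exact (hc ▸ h.adj hv).symm
  · intro hadj
    refine ⟨B.adj_sub hadj, ?_⟩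
    have hu : u ∈ B.verts := B.edge_vert hadj
    have hmem : v ∈ B.neighborSet u := hadj
    rw [h.neighborSet_eq hB hu] at hmem
    rcases hmem with rfl | rfl
    · exact Or.inl rfl
    · right; simp

lemma Fib.movesAdj (h : Fib B σ) : MovesAdj G σ := by
  intro i hi
  have hmem : i ∈ B.verts := h.mem_iff.mpr (Equiv.Perm.mem_support.mp hi)
  exact (B.adj_sub (h.adj hmem)).symm

lemma Fib.support_coe (h : Fib B σ) : ↑σ.support = B.verts := by
  ext v
  simp only [Finset.coe_sort_coe, Finset.mem_coe, Equiv.Perm.mem_support]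
  exact h.mem_iff.symm

lemma Fib.pow_mem (hσ : Fib B σ) {v : V} (hv : v ∈ B.verts) (n : ℕ) :
    (σ ^ n) v ∈ B.verts := by
  have h1 : v ∈ σ.support := by rw [← hσ.support_coe] at hv; exact hv
  have h2 : (σ ^ n) v ∈ σ.support := Equiv.Perm.pow_apply_mem_support.mpr h1
  rw [← hσ.support_coe]
  exact h2

lemma Fib.mk_pow_eq (hσ : Fib B σ) : ∀ (n : ℕ) {v : V} (hv : v ∈ B.verts)
    (h2 : (σ ^ n) v ∈ B.verts),
    B.coe.connectedComponentMk ⟨v, hv⟩ = B.coe.connectedComponentMk ⟨(σ ^ n) v, h2⟩ := by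
  intro n
  induction n with
  | zero =>
    intro v hv h2
    have heq : (⟨(σ ^ 0) v, h2⟩ : ↥B.verts) = ⟨v, hv⟩ := Subtype.ext (by simp)
    rw [heq]
  | succ n ih =>
    intro v hv h2
    have hx : (σ ^ n) v ∈ B.verts := hσ.pow_mem hv n
    rw [ih hv hx]
    have hadjV : B.Adj ((σ ^ n) v) ((σ ^ (n+1)) v) := by
      rw [pow_succ', Equiv.Perm.mul_apply]
      exact hσ.adj hx
    have hadj : B.coe.Adj ⟨(σ ^ n) v, hx⟩ ⟨(σ ^ (n+1)) v, h2⟩ := by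
      rw [SimpleGraph.Subgraph.coe_adj]
      exact hadjV
    exact SimpleGraph.ConnectedComponent.sound hadj.reachable

lemma Fib.mk_eq_of_sameCycle (hσ : Fib B σ) {u v : V} (hu : u ∈ B.verts)
    (hv : v ∈ B.verts) (h : σ.SameCycle u v) :
    B.coe.connectedComponentMk ⟨u, hu⟩ = B.coe.connectedComponentMk ⟨v, hv⟩ := by
  obtain ⟨i, _, _, hi⟩ := h.exists_pow_eq σ
  have := hσ.mk_pow_eq i hu (by rw [hi]; exact hv)
  rw [this]
  congr 1
  exact Subtype.ext hi

lemma Fib.sameCycle_of_adj (hB : IsElementarySubgraph B) (hσ : Fib B σ) {u x : V}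
    (h : B.Adj u x) : σ.SameCycle u x := by
  have hu : u ∈ B.verts := B.edge_vert h
  have hmem : x ∈ B.neighborSet u := h
  rw [hσ.neighborSet_eq hB hu] at hmem
  rcases hmem with rfl | rfl
  · exact ⟨1, by simp⟩
  · exact ⟨-1, by simp⟩

lemma sq_apply_eq_of_card_eq_two {v : V} (hv : σ v ≠ v)
    (h : (σ.cycleOf v).support.card = 2) : σ (σ v) = v := by
  obtain ⟨a, b, hab, hswap⟩ := Equiv.Perm.card_support_eq_two.mp h
  have hsq : σ.cycleOf v * σ.cycleOf v = 1 := by rw [hswap]; exact Equiv.swap_mul_self a b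
  have hcv : (σ.cycleOf v) v = σ v := σ.cycleOf_apply_self v
  have hc2 : (σ.cycleOf v) (σ v) = σ (σ v) := by
    rw [Equiv.Perm.cycleOf_apply, if_pos ⟨1, by simp⟩]
  have : (σ.cycleOf v * σ.cycleOf v) v = v := by rw [hsq]; rfl
  rw [Equiv.Perm.mul_apply, hcv, hc2] at this
  exact this

lemma card_eq_two_of_sq_apply_eq {v : V} (hv : σ v ≠ v) (h2 : σ (σ v) = v) :
    (σ.cycleOf v).support.card = 2 := by
  have hc : (σ.cycleOf v).IsCycle := Equiv.Perm.isCycle_cycleOf σ hv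
  have hcv : (σ.cycleOf v) v = σ v := σ.cycleOf_apply_self v
  have hne : (σ.cycleOf v) v ≠ v := by rwa [hcv]
  have happ : (σ.cycleOf v) ((σ.cycleOf v) v) = v := by
    rw [hcv, Equiv.Perm.cycleOf_apply, if_pos ⟨1, by simp⟩]
    exact h2
  have hswap := hc.eq_swap_of_apply_apply_eq_self hne happ
  rw [hswap]
  rw [Equiv.Perm.card_support_swap (Ne.symm hne)]

lemma sq_apply_ne_iff_card {v : V} (hv : σ v ≠ v) :
    σ (σ v) ≠ v ↔ 3 ≤ (σ.cycleOf v).support.card := by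
  have hc : (σ.cycleOf v).IsCycle := Equiv.Perm.isCycle_cycleOf σ hv
  have h2le := hc.two_le_card_support
  constructor
  · intro hne
    rcases Nat.lt_or_ge ((σ.cycleOf v).support.card) 3 with hlt | hge
    · exact absurd (sq_apply_eq_of_card_eq_two hv (by omega)) hne
    · exact hge
  · intro h3 h2
    have := card_eq_two_of_sq_apply_eq hv h2
    omega

/-- κ(B) is the number of cycle factors of a compatible permutation. -/
lemma Fib.numComponents_eq (hB : IsElementarySubgraph B) (hσ : Fib B σ) :
    numComponents B = σ.cycleFactorsFinset.card := by
  have hwd : ∀ (u v : ↥B.verts) (p : B.coe.Walk u v), p.IsPath →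
      σ.cycleOf ↑u = σ.cycleOf ↑v := by
    intro u v p hp
    clear hp
    induction p with
    | nil => rfl
    | @cons a b c h p ih =>
      have hsc : σ.SameCycle ↑a ↑b := hσ.sameCycle_of_adj hB h
      exact hsc.cycleOf_eq.trans ih
  set f : B.coe.ConnectedComponent → Perm V :=
    SimpleGraph.ConnectedComponent.lift (fun x => σ.cycleOf ↑x) hwd with hf
  have hfmk : ∀ v : ↥B.verts, f (B.coe.connectedComponentMk v) = σ.cycleOf ↑v :=
    fun v => rfl
  have hsupp : ∀ v : ↥B.verts, (v : V) ∈ σ.support := by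
    rintro ⟨x, hx⟩
    rw [← hσ.support_coe] at hx
    simpa using hx
  have hmemf : ∀ C, f C ∈ σ.cycleFactorsFinset := by
    intro C
    induction C using SimpleGraph.ConnectedComponent.ind with
    | _ v =>
      rw [hfmk]
      exact Equiv.Perm.cycleOf_mem_cycleFactorsFinset_iff.mpr (hsupp v)
  have hbij : Function.Bijective
      (fun C => (⟨f C, hmemf C⟩ : {c // c ∈ σ.cycleFactorsFinset})) := by
    constructor
    · intro C C' hCC
      simp only [Subtype.mk.injEq] at hCC
      induction C using SimpleGraph.ConnectedComponent.ind with
      | _ u =>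
        induction C' using SimpleGraph.ConnectedComponent.ind with
        | _ v =>
          rw [hfmk, hfmk] at hCC
          have hscv : σ.SameCycle ↑u ↑v := by
            have : (v : V) ∈ (σ.cycleOf ↑v).support :=
              Equiv.Perm.mem_support_cycleOf_iff.mpr ⟨Equiv.Perm.SameCycle.refl _ _, hsupp v⟩
            rw [← hCC] at this
            exact (Equiv.Perm.mem_support_cycleOf_iff.mp this).1
          exact hσ.mk_eq_of_sameCycle u.2 v.2 hscv
    · rintro ⟨c, hc⟩
      have hcyc := (Equiv.Perm.mem_cycleFactorsFinset_iff.mp hc).1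
      obtain ⟨x, hx⟩ := hcyc.nonempty_support
      have hxs : x ∈ σ.support := Equiv.Perm.mem_cycleFactorsFinset_support_le hc hx
      have hxv : x ∈ B.verts := by rw [← hσ.support_coe]; exact hxs
      refine ⟨B.coe.connectedComponentMk ⟨x, hxv⟩, ?_⟩
      simp only [Subtype.mk.injEq]
      rw [hfmk]
      exact (Equiv.Perm.cycle_is_cycleOf hx hc).symm
  rw [numComponents, Nat.card_eq_of_bijective _ hbij]
  simp [Nat.card_eq_fintype_card]

/-- c(B) is the number of long cycle factors of a compatible permutation. -/
lemma Fib.numCycles_eq (hB : IsElementarySubgraph B) (hσ : Fib B σ) :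
    numCycles B = (σ.cycleFactorsFinset.filter (fun c => 3 ≤ c.support.card)).card := by
  have hwd : ∀ (u v : ↥B.verts) (p : B.coe.Walk u v), p.IsPath →
      σ.cycleOf ↑u = σ.cycleOf ↑v := by
    intro u v p hp
    clear hp
    induction p with
    | nil => rfl
    | @cons a b c h p ih =>
      have hsc : σ.SameCycle ↑a ↑b := hσ.sameCycle_of_adj hB h
      exact hsc.cycleOf_eq.trans ih
  set f : B.coe.ConnectedComponent → Perm V :=
    SimpleGraph.ConnectedComponent.lift (fun x => σ.cycleOf ↑x) hwd with hf
  have hfmk : ∀ v : ↥B.verts, f (B.coe.connectedComponentMk v) = σ.cycleOf ↑v :=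
    fun v => rfl
  have hsupp : ∀ v : ↥B.verts, (v : V) ∈ σ.support := by
    rintro ⟨x, hx⟩
    rw [← hσ.support_coe] at hx
    simpa using hx
  have hmemf : ∀ C, f C ∈ σ.cycleFactorsFinset := by
    intro C
    induction C using SimpleGraph.ConnectedComponent.ind with
    | _ v =>
      rw [hfmk]
      exact Equiv.Perm.cycleOf_mem_cycleFactorsFinset_iff.mpr (hsupp v)
  have hdeg2 : ∀ (v : ↥B.verts), (subDeg B ↑v = 2 ↔ 3 ≤ (σ.cycleOf ↑v).support.card) := by
    intro v
    rw [hσ.deg_two_iff hB v.2]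
    exact sq_apply_ne_iff_card (hσ.ne v.2)
  have hlong : ∀ C, (∀ v : ↥B.verts, B.coe.connectedComponentMk v = C → subDeg B ↑v = 2) →
      3 ≤ (f C).support.card := by
    intro C
    induction C using SimpleGraph.ConnectedComponent.ind with
    | _ v =>
      intro h
      rw [hfmk]
      exact (hdeg2 v).mp (h v rfl)
  have hlong' : ∀ C, 3 ≤ (f C).support.card →
      (∀ v : ↥B.verts, B.coe.connectedComponentMk v = C → subDeg B ↑v = 2) := by
    intro C
    induction C using SimpleGraph.ConnectedComponent.ind with
    | _ v =>
      intro h3 u hu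
      have heq : σ.cycleOf ↑u = σ.cycleOf ↑v := by rw [← hfmk u, ← hfmk v, hu]
      rw [hdeg2 u, heq]
      rw [hfmk] at h3
      exact h3
  have hbij : Function.Bijective
      (fun C : {C : B.coe.ConnectedComponent //
          C ∈ {C | ∀ v : ↥B.verts, B.coe.connectedComponentMk v = C → subDeg B ↑v = 2}} =>
        (⟨f C.1, Finset.mem_filter.mpr ⟨hmemf C.1, hlong C.1 C.2⟩⟩ :
          {c // c ∈ σ.cycleFactorsFinset.filter (fun c => 3 ≤ c.support.card)})) := by
    constructor
    · rintro ⟨C, hC⟩ ⟨C', hC'⟩ hCC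
      simp only [Subtype.mk.injEq] at hCC ⊢
      induction C using SimpleGraph.ConnectedComponent.ind with
      | _ u =>
        induction C' using SimpleGraph.ConnectedComponent.ind with
        | _ v =>
          rw [hfmk, hfmk] at hCC
          have hscv : σ.SameCycle ↑u ↑v := by
            have hvm : (v : V) ∈ (σ.cycleOf ↑v).support :=
              Equiv.Perm.mem_support_cycleOf_iff.mpr ⟨Equiv.Perm.SameCycle.refl _ _, hsupp v⟩
            rw [← hCC] at hvm
            exact (Equiv.Perm.mem_support_cycleOf_iff.mp hvm).1
          exact hσ.mk_eq_of_sameCycle u.2 v.2 hscv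
    · rintro ⟨c, hc⟩
      rw [Finset.mem_filter] at hc
      have hcyc := (Equiv.Perm.mem_cycleFactorsFinset_iff.mp hc.1).1
      obtain ⟨x, hx⟩ := hcyc.nonempty_support
      have hxs : x ∈ σ.support := Equiv.Perm.mem_cycleFactorsFinset_support_le hc.1 hx
      have hxv : x ∈ B.verts := by rw [← hσ.support_coe]; exact hxs
      have hfC : f (B.coe.connectedComponentMk ⟨x, hxv⟩) = c := by
        rw [hfmk]
        exact (Equiv.Perm.cycle_is_cycleOf hx hc.1).symm
      refine ⟨⟨B.coe.connectedComponentMk ⟨x, hxv⟩, ?_⟩, ?_⟩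
      · exact hlong' _ (by rw [hfC]; exact hc.2)
      · simp only [Subtype.mk.injEq]
        exact hfC
  rw [numCycles, Nat.card_eq_of_bijective _ hbij]
  rw [Nat.card_eq_fintype_card]
  exact Fintype.card_coe _

open scoped Classical in
/-- Reverse `σ₀` on the cycles belonging to `s`. -/
noncomputable def revOn (σ₀ : Perm V) (s : Finset (Perm V)) : Perm V where
  toFun v := if σ₀.cycleOf v ∈ s then σ₀⁻¹ v else σ₀ v
  invFun v := if σ₀.cycleOf v ∈ s then σ₀ v else σ₀⁻¹ v
  left_inv := by
    intro v
    by_cases h : σ₀.cycleOf v ∈ s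
    · simp only [if_pos h]
      have hc : σ₀.cycleOf (σ₀⁻¹ v) = σ₀.cycleOf v :=
        Equiv.Perm.SameCycle.cycleOf_eq (show σ₀.SameCycle (σ₀⁻¹ v) v from ⟨1, by simp⟩)
      rw [hc, if_pos h]
      simp
    · simp only [if_neg h]
      have hc : σ₀.cycleOf (σ₀ v) = σ₀.cycleOf v :=
        Equiv.Perm.SameCycle.cycleOf_eq (show σ₀.SameCycle (σ₀ v) v from ⟨-1, by simp⟩)
      rw [hc, if_neg h]
      simp
  right_inv := by
    intro v
    by_cases h : σ₀.cycleOf v ∈ s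
    · simp only [if_pos h]
      have hc : σ₀.cycleOf (σ₀ v) = σ₀.cycleOf v :=
        Equiv.Perm.SameCycle.cycleOf_eq (show σ₀.SameCycle (σ₀ v) v from ⟨-1, by simp⟩)
      rw [hc, if_pos h]
      simp
    · simp only [if_neg h]
      have hc : σ₀.cycleOf (σ₀⁻¹ v) = σ₀.cycleOf v :=
        Equiv.Perm.SameCycle.cycleOf_eq (show σ₀.SameCycle (σ₀⁻¹ v) v from ⟨1, by simp⟩)
      rw [hc, if_neg h]
      simp

lemma revOn_apply_mem {σ₀ : Perm V} {s : Finset (Perm V)} {v : V}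
    (h : σ₀.cycleOf v ∈ s) : revOn σ₀ s v = σ₀⁻¹ v := by
  simp only [revOn, Equiv.coe_fn_mk]
  rw [if_pos h]

lemma revOn_apply_not_mem {σ₀ : Perm V} {s : Finset (Perm V)} {v : V}
    (h : σ₀.cycleOf v ∉ s) : revOn σ₀ s v = σ₀ v := by
  simp only [revOn, Equiv.coe_fn_mk]
  rw [if_neg h]

lemma Fib.revOn {σ₀ : Perm V} (hσ₀ : Fib B σ₀) (s : Finset (Perm V)) :
    Fib B (SachsAux.revOn σ₀ s) := by
  refine ⟨fun v hv => ?_, fun v hv => ?_, fun v hv hd => ?_⟩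
  · by_cases h : σ₀.cycleOf v ∈ s
    · rw [revOn_apply_mem h]
      exact hσ₀.inv.fix hv
    · rw [revOn_apply_not_mem h]
      exact hσ₀.fix hv
  · by_cases h : σ₀.cycleOf v ∈ s
    · rw [revOn_apply_mem h]
      exact hσ₀.adj_inv hv
    · rw [revOn_apply_not_mem h]
      exact hσ₀.adj hv
  · by_cases h : σ₀.cycleOf v ∈ s
    · rw [revOn_apply_mem h]
      have hc : σ₀.cycleOf (σ₀⁻¹ v) = σ₀.cycleOf v :=
        Equiv.Perm.SameCycle.cycleOf_eq (show σ₀.SameCycle (σ₀⁻¹ v) v from ⟨1, by simp⟩)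
      rw [revOn_apply_mem (hc ▸ h)]
      intro hcon
      apply hσ₀.no2 hv hd
      have : σ₀ (σ₀ (σ₀⁻¹ (σ₀⁻¹ v))) = σ₀ (σ₀ v) := by rw [hcon]
      simpa using this.symm
    · rw [revOn_apply_not_mem h]
      have hc : σ₀.cycleOf (σ₀ v) = σ₀.cycleOf v :=
        Equiv.Perm.SameCycle.cycleOf_eq (show σ₀.SameCycle (σ₀ v) v from ⟨-1, by simp⟩)
      rw [revOn_apply_not_mem (hc ▸ h)]
      exact hσ₀.no2 hv hd

/-- The number of permutations compatible with an elementary subgraph is `2 ^ c(B)`. -/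
lemma Fib.card_fiber {σ₀ : Perm V} (hB : IsElementarySubgraph B) (hσ₀ : Fib B σ₀) :
    {τ : Perm V | Fib B τ}.ncard = 2 ^ numCycles B := by
  classical
  rw [hσ₀.numCycles_eq hB]
  set LF := σ₀.cycleFactorsFinset.filter (fun c => 3 ≤ c.support.card) with hLF
  have hset : {τ : Perm V | Fib B τ} = ↑(Finset.univ.filter (fun τ => Fib B τ)) := by
    ext τ; simp
  rw [hset, Set.ncard_coe_finset, ← Finset.card_powerset]
  apply Finset.card_bij'
    (i := fun τ _ => LF.filter (fun c => ∃ v ∈ c.support, τ v ≠ σ₀ v))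
    (j := fun s _ => SachsAux.revOn σ₀ s)
  · intro τ _
    exact Finset.mem_powerset.mpr (Finset.filter_subset _ _)
  · intro s _
    simp only [Finset.mem_filter, Finset.mem_univ, true_and]
    exact hσ₀.revOn s
  -- left inverse : revOn σ₀ (i τ) = τ
  · intro τ hτmem
    have hτ : Fib B τ := by simpa using hτmem
    apply Equiv.ext
    intro v
    by_cases hv : v ∈ B.verts
    · have hvs : v ∈ σ₀.support := by rw [← hσ₀.support_coe] at hv; simpa using hv
      have hcfac : σ₀.cycleOf v ∈ σ₀.cycleFactorsFinset :=
        Equiv.Perm.cycleOf_mem_cycleFactorsFinset_iff.mpr hvs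
      by_cases hmem : σ₀.cycleOf v ∈ LF.filter (fun c => ∃ u ∈ c.support, τ u ≠ σ₀ u)
      · rw [revOn_apply_mem hmem]
        rw [Finset.mem_filter] at hmem
        obtain ⟨u, hu, hne⟩ := hmem.2
        have hLFmem := hmem.1
        have hscu : σ₀.SameCycle v u := (Equiv.Perm.mem_support_cycleOf_iff.mp hu).1
        have hus : u ∈ σ₀.support :=
          Equiv.Perm.mem_cycleFactorsFinset_support_le hcfac hu
        have huv : u ∈ B.verts := by rw [← hσ₀.support_coe]; simpa using hus
        have hτu : τ u = σ₀⁻¹ u := by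
          have hmemN : τ u ∈ B.neighborSet u := hτ.adj huv
          rw [hσ₀.neighborSet_eq hB huv] at hmemN
          rcases hmemN with hc | hc
          · exact absurd hc hne
          · exact hc
        have hscinv : σ₀⁻¹.SameCycle u v := Equiv.Perm.sameCycle_inv.mpr hscu.symm
        obtain ⟨i, _, _, hi⟩ := hscinv.exists_pow_eq σ₀⁻¹
        have hagree := Fib.agree hB hσ₀.inv hτ huv hτu i
        rw [hi] at hagree
        exact hagree.symm
      · rw [revOn_apply_not_mem hmem]
        rw [Finset.mem_filter, not_and_or] at hmem
        rcases hmem with hnLF | hnex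
        · -- short cycle: σ₀⁻¹ v = σ₀ v and τ v ∈ {σ₀ v, σ₀⁻¹ v}
          have hvne : σ₀ v ≠ v := Equiv.Perm.mem_support.mp hvs
          have hcard : ¬ 3 ≤ (σ₀.cycleOf v).support.card := by
            intro h3
            exact hnLF (Finset.mem_filter.mpr ⟨hcfac, h3⟩)
          have hsq : σ₀ (σ₀ v) = v := by
            by_contra hc
            exact hcard ((sq_apply_ne_iff_card hvne).mp hc)
          have heq : σ₀⁻¹ v = σ₀ v := by
            apply σ₀.injective
            simp [hsq]
          have hmemN : τ v ∈ B.neighborSet v := hτ.adj hv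
          rw [hσ₀.neighborSet_eq hB hv] at hmemN
          rcases hmemN with hc | hc
          · exact hc.symm
          · rw [hc, heq]
        · push_neg at hnex
          have hvm : v ∈ (σ₀.cycleOf v).support :=
            Equiv.Perm.mem_support_cycleOf_iff.mpr ⟨Equiv.Perm.SameCycle.refl _ _, hvs⟩
          exact (hnex v hvm).symm
    · have h1 : σ₀ v = v := hσ₀.fix hv
      have h2 : τ v = v := hτ.fix hv
      rw [h2]
      by_cases h : σ₀.cycleOf v ∈ LF.filter (fun c => ∃ u ∈ c.support, τ u ≠ σ₀ u)
      · rw [revOn_apply_mem h]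
        apply σ₀.injective
        simp [h1]
      · rw [revOn_apply_not_mem h]
        exact h1
  -- right inverse : i (revOn σ₀ s) = s
  · intro s hs
    rw [Finset.mem_powerset] at hs
    ext c
    simp only [Finset.mem_filter]
    constructor
    · rintro ⟨hcLF, u, hu, hne⟩
      have hcfac : c ∈ σ₀.cycleFactorsFinset := (Finset.mem_filter.mp hcLF).1
      have hceq : c = σ₀.cycleOf u := Equiv.Perm.cycle_is_cycleOf hu hcfac
      by_cases hmem : σ₀.cycleOf u ∈ s
      · rw [hceq]; exact hmem
      · exact absurd (revOn_apply_not_mem hmem) hne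
    · intro hcs
      have hcLF : c ∈ LF := hs hcs
      refine ⟨hcLF, ?_⟩
      rw [Finset.mem_filter] at hcLF
      have hcyc := (Equiv.Perm.mem_cycleFactorsFinset_iff.mp hcLF.1).1
      obtain ⟨u, hu⟩ := hcyc.nonempty_support
      have hus : u ∈ σ₀.support :=
        Equiv.Perm.mem_cycleFactorsFinset_support_le hcLF.1 hu
      have hceq : c = σ₀.cycleOf u := Equiv.Perm.cycle_is_cycleOf hu hcLF.1
      refine ⟨u, hu, ?_⟩
      rw [revOn_apply_mem (by rw [← hceq]; exact hcs)]
      have hune : σ₀ u ≠ u := Equiv.Perm.mem_support.mp hus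
      have hsq : σ₀ (σ₀ u) ≠ u := by
        rw [sq_apply_ne_iff_card hune, ← hceq]
        exact hcLF.2
      intro hcon
      apply hsq
      have : σ₀ (σ₀⁻¹ u) = σ₀ (σ₀ u) := by rw [hcon]
      simpa using this.symm

section Existence

variable {S : Set V}

lemma delete_neighborSet (hclosed : ∀ x ∈ S, B.neighborSet x ⊆ S) {y : V}
    (hy : y ∈ B.verts) (hyS : y ∉ S) :
    (B.deleteVerts S).neighborSet y = B.neighborSet y := by
  ext t
  simp only [SimpleGraph.Subgraph.mem_neighborSet, SimpleGraph.Subgraph.deleteVerts_adj]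
  constructor
  · rintro ⟨-, -, -, -, h⟩; exact h
  · intro h
    have htS : t ∉ S := by
      intro htS
      exact hyS (hclosed t htS h.symm)
    exact ⟨hy, hyS, B.edge_vert h.symm, htS, h⟩

lemma delete_elementary (hB : IsElementarySubgraph B)
    (hclosed : ∀ x ∈ S, B.neighborSet x ⊆ S) :
    IsElementarySubgraph (B.deleteVerts S) := by
  have hdeg : ∀ y ∈ B.verts \ S, subDeg (B.deleteVerts S) y = subDeg B y := by
    rintro y ⟨hy, hyS⟩
    unfold subDeg
    rw [delete_neighborSet hclosed hy hyS]
  constructor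
  · intro v hv
    rw [SimpleGraph.Subgraph.deleteVerts_verts] at hv
    rw [hdeg v hv]
    exact hB.1 v hv.1
  · intro u v huv
    rw [SimpleGraph.Subgraph.deleteVerts_adj] at huv
    obtain ⟨hu, huS, hv, hvS, h⟩ := huv
    rw [hdeg u ⟨hu, huS⟩, hdeg v ⟨hv, hvS⟩]
    exact hB.2 u v h

lemma extend_fib (hSsub : S ⊆ B.verts)
    (hclosed : ∀ x ∈ S, B.neighborSet x ⊆ S)
    {f : Perm V} (hfix : ∀ x, x ∉ S → f x = x)
    (hfS : ∀ x ∈ S, B.Adj x (f x) ∧ (subDeg B x = 2 → f (f x) ≠ x))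
    {σ' : Perm V} (hσ' : Fib (B.deleteVerts S) σ') :
    Fib B (f * σ') := by
  have hdeg : ∀ y ∈ B.verts \ S, subDeg (B.deleteVerts S) y = subDeg B y := by
    rintro y ⟨hy, hyS⟩
    unfold subDeg
    rw [delete_neighborSet hclosed hy hyS]
  have hfmemS : ∀ x ∈ S, f x ∈ S := fun x hx => hclosed x hx (hfS x hx).1
  have hvertsB' : (B.deleteVerts S).verts = B.verts \ S :=
    SimpleGraph.Subgraph.deleteVerts_verts
  have heval_S : ∀ x ∈ S, (f * σ') x = f x := by
    intro x hx
    have : σ' x = x := hσ'.fix (by rw [hvertsB']; rintro ⟨-, hc⟩; exact hc hx)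
    rw [Equiv.Perm.mul_apply, this]
  have heval_B' : ∀ x ∈ B.verts \ S, (f * σ') x = σ' x := by
    intro x hx
    have hmem : x ∈ (B.deleteVerts S).verts := by rw [hvertsB']; exact hx
    have h1 : σ' x ∈ (B.deleteVerts S).verts := hσ'.mem_of_mem hmem
    rw [hvertsB'] at h1
    rw [Equiv.Perm.mul_apply, hfix _ h1.2]
  refine ⟨fun v hv => ?_, fun v hv => ?_, fun v hv hd => ?_⟩
  · have hvS : v ∉ S := fun hc => hv (hSsub hc)
    have : σ' v = v := hσ'.fix (by rw [hvertsB']; rintro ⟨hc, -⟩; exact hv hc)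
    rw [Equiv.Perm.mul_apply, this, hfix _ hvS]
  · by_cases hvS : v ∈ S
    · rw [heval_S v hvS]
      exact (hfS v hvS).1
    · rw [heval_B' v ⟨hv, hvS⟩]
      have hmem : v ∈ (B.deleteVerts S).verts := by rw [hvertsB']; exact ⟨hv, hvS⟩
      have := hσ'.adj hmem
      rw [SimpleGraph.Subgraph.deleteVerts_adj] at this
      exact this.2.2.2.2
  · by_cases hvS : v ∈ S
    · rw [heval_S v hvS, heval_S _ (hfmemS v hvS)]
      exact (hfS v hvS).2 hd
    · have hvB' : v ∈ B.verts \ S := ⟨hv, hvS⟩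
      have hmem : v ∈ (B.deleteVerts S).verts := by rw [hvertsB']; exact hvB'
      have h1 : σ' v ∈ (B.deleteVerts S).verts := hσ'.mem_of_mem hmem
      rw [hvertsB'] at h1
      rw [heval_B' v hvB', heval_B' _ h1]
      exact hσ'.no2 hmem (by rw [hdeg v hvB']; exact hd)

lemma cycle_list_fib (hB : IsElementarySubgraph B) {l : List V} (hnd : l.Nodup)
    (hlen : 3 ≤ l.length) (hchain : l.Chain' B.Adj) (hne : l ≠ [])
    (hclose : B.Adj (l.getLast hne) (l.head hne))
    (hdeg : ∀ x ∈ l, subDeg B x = 2) :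
    (∀ x ∈ l, B.neighborSet x ⊆ {y | y ∈ l}) ∧
      ∀ x ∈ l, B.Adj x (l.formPerm x) ∧ l.formPerm (l.formPerm x) ≠ x := by
  set f := l.formPerm with hf
  have hlpos : 0 < l.length := by omega
  have hadj_next : ∀ (i : ℕ) (h : i < l.length), B.Adj l[i] (f l[i]) := by
    intro i h
    rw [hf, List.formPerm_apply_getElem l hnd i h]
    rcases Nat.lt_or_ge (i + 1) l.length with h1 | h1
    · simp only [Nat.mod_eq_of_lt h1]
      exact List.isChain_iff_getElem.mp hchain i (by omega)
    · have hmod : (i + 1) % l.length = 0 := by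
        have he : i + 1 = l.length := by omega
        rw [he, Nat.mod_self]
      simp only [hmod]
      have hlast : l.getLast hne = l[i] := by
        rw [List.getLast_eq_getElem]
        congr 1
        omega
      have hhead : l.head hne = l[0] := by
        rw [List.head_eq_getElem]
      rw [hlast, hhead] at hclose
      exact hclose
  have hmem_next : ∀ x ∈ l, f x ∈ l := by
    intro x hx
    obtain ⟨i, h, rfl⟩ := List.getElem_of_mem hx
    rw [hf, List.formPerm_apply_getElem l hnd i h]
    exact List.getElem_mem _
  have hsq : ∀ (i : ℕ) (h : i < l.length),
      f (f l[i]) = l[(i + 2) % l.length]'(Nat.mod_lt _ hlpos) := by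
    intro i h
    rw [hf, List.formPerm_apply_getElem l hnd i h,
      List.formPerm_apply_getElem l hnd _ (Nat.mod_lt _ hlpos)]
    congr 1
    rw [Nat.mod_add_mod]
  have hsq_ne : ∀ (i : ℕ) (h : i < l.length), f (f l[i]) ≠ l[i] := by
    intro i h hcon
    rw [hsq i h] at hcon
    have heq := (List.Nodup.getElem_inj_iff hnd).mp hcon
    rcases Nat.lt_or_ge (i + 2) l.length with h2 | h2
    · rw [Nat.mod_eq_of_lt h2] at heq; omega
    · have hmod : (i + 2) % l.length = i + 2 - l.length := by
        rw [Nat.mod_eq_sub_mod h2]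
        exact Nat.mod_eq_of_lt (by omega)
      rw [hmod] at heq
      omega
  have hsq_ne' : ∀ x ∈ l, f (f x) ≠ x := by
    intro x hx
    obtain ⟨i, h, rfl⟩ := List.getElem_of_mem hx
    exact hsq_ne i h
  have hadj' : ∀ x ∈ l, B.Adj x (f x) := by
    intro x hx
    obtain ⟨i, h, rfl⟩ := List.getElem_of_mem hx
    exact hadj_next i h
  have hinv_mem : ∀ x ∈ l, f⁻¹ x ∈ l := by
    intro x hx
    by_contra hc
    have hns : f⁻¹ x ∉ l.toFinset := by simpa using hc
    have hnsup : f⁻¹ x ∉ f.support := fun hin => hns (List.support_formPerm_le l hin)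
    rw [Equiv.Perm.notMem_support] at hnsup
    have hx2 : x = f⁻¹ x := (f.apply_symm_apply x).symm.trans hnsup
    exact hc (hx2 ▸ hx)
  have hadj_inv : ∀ x ∈ l, B.Adj x (f⁻¹ x) := by
    intro x hx
    have hy := hadj' _ (hinv_mem x hx)
    rw [show f (f⁻¹ x) = x from f.apply_symm_apply x] at hy
    exact hy.symm
  have hne_fs : ∀ x ∈ l, f x ≠ f⁻¹ x := by
    intro x hx hcon
    apply hsq_ne' x hx
    rw [hcon]
    exact f.apply_symm_apply x
  constructor
  · intro x hx
    have hNx : B.neighborSet x = {f x, f⁻¹ x} := by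
      have hsub : ({f x, f⁻¹ x} : Set V) ⊆ B.neighborSet x := by
        intro t ht
        rcases ht with rfl | rfl
        · exact hadj' x hx
        · exact hadj_inv x hx
      refine (Set.eq_of_subset_of_ncard_le hsub ?_ (Set.toFinite _)).symm
      rw [Set.ncard_pair (hne_fs x hx)]
      exact le_of_eq (hdeg x hx)
    rw [hNx]
    intro t ht
    rcases ht with rfl | rfl
    · exact hmem_next x hx
    · exact hinv_mem x hx
  · intro x hx
    exact ⟨hadj' x hx, hsq_ne' x hx⟩

lemma walk_head_support {W : Type*} {H : SimpleGraph W} {u v : W} (p : H.Walk u v) :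
    p.support.head (p.support_ne_nil) = u := by
  cases p <;> rfl

lemma walk_getLast_support {W : Type*} {H : SimpleGraph W} {u v : W} (p : H.Walk u v) :
    p.support.getLast (p.support_ne_nil) = v := by
  have h1 : p.reverse.support.head (p.reverse.support_ne_nil) = v := by
    cases hp : p.reverse <;> rfl
  simp only [SimpleGraph.Walk.support_reverse, List.head_reverse] at h1
  exact h1

lemma walk_support_of_length_one {W : Type*} {H : SimpleGraph W} {u v : W}
    (p : H.Walk u v) (h : p.length = 1) : p.support = [u, v] := by
  cases p with
  | nil => simp at h
  | cons hadj q =>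
    cases q with
    | nil => simp
    | cons h2 q2 => simp [SimpleGraph.Walk.length_cons] at h

lemma exists_fib : ∀ (n : ℕ) (B : G.Subgraph), B.verts.ncard = n → IsElementarySubgraph B →
    ∃ σ : Perm V, Fib B σ := by
  intro n
  induction n using Nat.strong_induction_on with
  | _ n ih =>
  intro B hn hB
  by_cases hemp : B.verts = ∅
  · refine ⟨1, fun v _ => rfl, fun v hv => ?_, fun v hv _ => ?_⟩ <;>
      (exfalso; rw [hemp] at hv; exact hv)
  have hnpos : 0 < n := by
    rw [← hn]
    exact (Set.ncard_pos (Set.toFinite _)).mpr (Set.nonempty_iff_ne_empty.mpr hemp)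
  by_cases hd1 : ∃ v ∈ B.verts, subDeg B v = 1
  · -- CASE: there is a degree-one vertex, remove an isolated edge
    obtain ⟨v, hv, hdegv⟩ := hd1
    obtain ⟨u, hNv⟩ := Set.ncard_eq_one.mp hdegv
    have hadj : B.Adj v u := by
      have hmem : u ∈ B.neighborSet v := by rw [hNv]; exact rfl
      exact hmem
    have hvu : v ≠ u := (B.adj_sub hadj).ne
    have hu : u ∈ B.verts := B.edge_vert hadj.symm
    have hdegu : subDeg B u = 1 := by rw [← hB.2 v u hadj]; exact hdegv
    have hNu : B.neighborSet u = {v} := by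
      obtain ⟨t, hNt⟩ := Set.ncard_eq_one.mp hdegu
      have hvmem : v ∈ B.neighborSet u := hadj.symm
      rw [hNt] at hvmem ⊢
      rw [Set.mem_singleton_iff] at hvmem
      rw [hvmem]
    set S : Set V := {v, u} with hS
    have hSsub : S ⊆ B.verts := by
      intro x hx
      rcases hx with rfl | hx
      · exact hv
      · rw [Set.mem_singleton_iff] at hx; subst hx; exact hu
    have hclosed : ∀ x ∈ S, B.neighborSet x ⊆ S := by
      intro x hx
      rcases hx with rfl | hx
      · rw [hNv]
        intro t ht
        rw [Set.mem_singleton_iff] at ht; subst ht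
        right; rfl
      · rw [Set.mem_singleton_iff] at hx; subst hx
        rw [hNu]
        intro t ht
        rw [Set.mem_singleton_iff] at ht; subst ht
        left; rfl
    have hlt : (B.deleteVerts S).verts.ncard < n := by
      rw [SimpleGraph.Subgraph.deleteVerts_verts, ← hn]
      refine Set.ncard_lt_ncard ?_ (Set.toFinite _)
      rw [Set.ssubset_iff_of_subset Set.diff_subset]
      exact ⟨v, hv, fun hc => hc.2 (Or.inl rfl)⟩
    obtain ⟨σ', hσ'⟩ := ih _ hlt (B.deleteVerts S) rfl (delete_elementary hB hclosed)
    refine ⟨Equiv.swap v u * σ', extend_fib hSsub hclosed ?_ ?_ hσ'⟩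
    · intro x hx
      apply Equiv.swap_apply_of_ne_of_ne
      · intro hc; subst hc; exact hx (Or.inl rfl)
      · intro hc; subst hc; exact hx (Or.inr rfl)
    · intro x hx
      rcases hx with rfl | hx
      · rw [Equiv.swap_apply_left]
        exact ⟨hadj, fun h2 => absurd (hdegv.symm.trans h2) (by omega)⟩
      · rw [Set.mem_singleton_iff] at hx; subst hx
        rw [Equiv.swap_apply_right]
        exact ⟨hadj.symm, fun h2 => absurd (hdegu.symm.trans h2) (by omega)⟩
  · -- CASE: all degrees are two; find a cycle via a maximal path
    push_neg at hd1
    have hdeg2 : ∀ v ∈ B.verts, subDeg B v = 2 :=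
      fun v hv => (hB.1 v hv).resolve_left (hd1 v hv)
    obtain ⟨v₀, hv₀⟩ := Set.nonempty_iff_ne_empty.mpr hemp
    haveI : Fintype ↥B.verts := (Set.toFinite B.verts).fintype
    classical
    set H := B.coe with hH
    set P : ℕ → Prop := fun m =>
      ∃ (a b : ↥B.verts) (p : H.Walk a b), p.IsPath ∧ p.length = m with hPdef
    have hP0 : P 0 := ⟨⟨v₀, hv₀⟩, ⟨v₀, hv₀⟩, SimpleGraph.Walk.nil,
      SimpleGraph.Walk.IsPath.nil, rfl⟩
    have hPb : ∀ m, P m → m < Fintype.card ↥B.verts := by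
      rintro m ⟨a, b, p, hp, rfl⟩
      exact hp.length_lt
    set M := Nat.findGreatest P (Fintype.card ↥B.verts) with hM
    have hPM : P M := Nat.findGreatest_spec (Nat.zero_le _) hP0
    have hmax : ∀ (a b : ↥B.verts) (q : H.Walk a b), q.IsPath → q.length ≤ M := by
      intro a b q hq
      by_contra hc
      push_neg at hc
      exact Nat.findGreatest_is_greatest hc (le_of_lt (hPb _ ⟨a, b, q, hq, rfl⟩))
        ⟨a, b, q, hq, rfl⟩
    obtain ⟨a, b, p, hp, hplen⟩ := hPM
    have hdb : subDeg B ↑b = 2 := hdeg2 _ b.2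
    obtain ⟨x₁, x₂, hx12, hNb⟩ := Set.ncard_eq_two.mp hdb
    have hadj1 : B.Adj ↑b x₁ := by
      have hmem : x₁ ∈ B.neighborSet ↑b := by rw [hNb]; exact Or.inl rfl
      exact hmem
    have hadj2 : B.Adj ↑b x₂ := by
      have hmem : x₂ ∈ B.neighborSet ↑b := by rw [hNb]; exact Or.inr rfl
      exact hmem
    have hx1v : x₁ ∈ B.verts := B.edge_vert hadj1.symm
    have hx2v : x₂ ∈ B.verts := B.edge_vert hadj2.symm
    have hHadj1 : H.Adj b ⟨x₁, hx1v⟩ := by rw [hH, SimpleGraph.Subgraph.coe_adj]; exact hadj1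
    have hHadj2 : H.Adj b ⟨x₂, hx2v⟩ := by rw [hH, SimpleGraph.Subgraph.coe_adj]; exact hadj2
    have hext : ∀ (y : ↥B.verts), H.Adj b y → y ∈ p.support := by
      intro y hy
      by_contra hc
      have hq : (SimpleGraph.Walk.cons hy.symm p.reverse).IsPath := by
        apply hp.reverse.cons
        rw [SimpleGraph.Walk.support_reverse]
        simpa using hc
      have hle := hmax _ _ _ hq
      rw [SimpleGraph.Walk.length_cons, SimpleGraph.Walk.length_reverse] at hle
      omega
    have hM1 : 1 ≤ M := by
      have hone : (SimpleGraph.Walk.cons hHadj1 SimpleGraph.Walk.nil).IsPath := by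
        apply SimpleGraph.Walk.IsPath.nil.cons
        simp only [SimpleGraph.Walk.support_nil, List.mem_singleton]
        intro hc
        exact hHadj1.ne hc
      have hle := hmax _ _ _ hone
      simpa using hle
    have hplen1 : 1 ≤ p.length := by rw [hplen]; exact hM1
    have hm1 : (⟨x₁, hx1v⟩ : ↥B.verts) ∈ p.support := hext _ hHadj1
    have hm2 : (⟨x₂, hx2v⟩ : ↥B.verts) ∈ p.support := hext _ hHadj2
    have hdroplen : ∀ (y : ↥B.verts) (hy : y ∈ p.support), y ≠ b →
        1 ≤ (p.dropUntil y hy).length := by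
      intro y hy hne
      by_contra hc
      push_neg at hc
      exact hne (SimpleGraph.Walk.eq_of_length_eq_zero (p := p.dropUntil y hy) (by omega))
    have hnotboth : ¬((p.dropUntil _ hm1).length = 1 ∧ (p.dropUntil _ hm2).length = 1) := by
      rintro ⟨h1, h2⟩
      have hs1 := walk_support_of_length_one _ h1
      have hs2 := walk_support_of_length_one _ h2
      have hps1 : p.support = (p.takeUntil _ hm1).support ++ [b] := by
        conv_lhs => rw [← SimpleGraph.Walk.take_spec p hm1]
        rw [SimpleGraph.Walk.support_append, hs1]
        rfl
      have hps2 : p.support = (p.takeUntil _ hm2).support ++ [b] := by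
        conv_lhs => rw [← SimpleGraph.Walk.take_spec p hm2]
        rw [SimpleGraph.Walk.support_append, hs2]
        rfl
      have hteq : (p.takeUntil _ hm1).support = (p.takeUntil _ hm2).support :=
        List.append_cancel_right (hps1.symm.trans hps2)
      have he1 := walk_getLast_support (p.takeUntil _ hm1)
      have he2 := walk_getLast_support (p.takeUntil _ hm2)
      simp only [hteq] at he1
      have heq12 : (⟨x₁, hx1v⟩ : ↥B.verts) = ⟨x₂, hx2v⟩ := he1.symm.trans he2
      exact hx12 (by simpa using heq12)
    have hbx1 : (⟨x₁, hx1v⟩ : ↥B.verts) ≠ b := hHadj1.ne'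
    have hbx2 : (⟨x₂, hx2v⟩ : ↥B.verts) ≠ b := hHadj2.ne'
    obtain ⟨z, hzv, hzmem, hadjz, hrlen⟩ : ∃ (z : V) (hzv : z ∈ B.verts)
        (hzm : (⟨z, hzv⟩ : ↥B.verts) ∈ p.support),
        B.Adj ↑b z ∧ 2 ≤ (p.dropUntil _ hzm).length := by
      rcases Nat.lt_or_ge (p.dropUntil _ hm1).length 2 with hl1 | hl1
      · have h11 : (p.dropUntil _ hm1).length = 1 := by
          have := hdroplen _ hm1 hbx1
          omega
        have h2ge : 2 ≤ (p.dropUntil _ hm2).length := by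
          have hg1 := hdroplen _ hm2 hbx2
          rcases Nat.lt_or_ge (p.dropUntil _ hm2).length 2 with hl2 | hl2
          · exact absurd ⟨h11, by omega⟩ hnotboth
          · exact hl2
        exact ⟨x₂, hx2v, hm2, hadj2, h2ge⟩
      · exact ⟨x₁, hx1v, hm1, hadj1, hl1⟩
    set r := p.dropUntil _ hzmem with hr
    have hrpath : r.IsPath := hp.dropUntil _
    set l : List V := r.support.map Subtype.val with hl
    have hnd : l.Nodup := hrpath.support_nodup.map Subtype.val_injective
    have hlen : 3 ≤ l.length := by
      rw [hl, List.length_map, SimpleGraph.Walk.length_support]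
      omega
    have hlne : l ≠ [] := by
      intro hc
      rw [hc] at hlen
      simp at hlen
    have hchain : l.Chain' B.Adj := by
      have hc := r.isChain_adj_support
      rw [hl]
      show List.IsChain _ _
      rw [List.isChain_map]
      refine hc.imp ?_
      intro c d hcd
      rw [hH, SimpleGraph.Subgraph.coe_adj] at hcd
      exact hcd
    have hheadl : l.head hlne = z :=
      (List.head_map (f := Subtype.val) (l := r.support) hlne).trans
        (congrArg Subtype.val (walk_head_support r))
    have hlastl : l.getLast hlne = ↑b :=
      (List.getLast_map (f := Subtype.val) (l := r.support) hlne).trans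
        (congrArg Subtype.val (walk_getLast_support r))
    have hclose : B.Adj (l.getLast hlne) (l.head hlne) := by
      rw [hheadl, hlastl]
      exact hadjz
    have hdegl : ∀ x ∈ l, subDeg B x = 2 := by
      intro x hx
      obtain ⟨y, _, rfl⟩ := List.mem_map.mp hx
      exact hdeg2 _ y.2
    obtain ⟨hclosure, hfprop⟩ := cycle_list_fib hB hnd hlen hchain hlne hclose hdegl
    set S : Set V := {x | x ∈ l} with hSdef
    have hSsub : S ⊆ B.verts := by
      intro x hx
      obtain ⟨y, _, rfl⟩ := List.mem_map.mp hx
      exact y.2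
    have hzS : z ∈ S := by
      rw [hSdef]
      have := List.head_mem hlne
      rwa [hheadl] at this
    have hlt : (B.deleteVerts S).verts.ncard < n := by
      rw [SimpleGraph.Subgraph.deleteVerts_verts, ← hn]
      refine Set.ncard_lt_ncard ?_ (Set.toFinite _)
      rw [Set.ssubset_iff_of_subset Set.diff_subset]
      exact ⟨z, hzv, fun hc => hc.2 hzS⟩
    obtain ⟨σ', hσ'⟩ := ih _ hlt _ rfl (delete_elementary hB hclosure)
    refine ⟨l.formPerm * σ', extend_fib hSsub hclosure ?_ ?_ hσ'⟩
    · intro x hx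
      have hx1 : x ∉ l.toFinset := fun h => hx (List.mem_toFinset.mp h)
      have hx2 : x ∉ l.formPerm.support := fun hin => hx1 (List.support_formPerm_le l hin)
      rwa [Equiv.Perm.notMem_support] at hx2
    · intro x hx
      exact ⟨(hfprop x hx).1, fun _ => (hfprop x hx).2⟩

end Existence

section Weights

lemma Fib.fiber_card (hB : IsElementarySubgraph B) (hσ : Fib B σ) {u v : V}
    (hadj : B.Adj u v) :
    (σ.support.filter (fun i => s(i, σ i) = s(u, v))).card
      = if (∀ x ∈ s(u,v), subDeg B x = 1) then 2 else 1 := by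
  classical
  have hu : u ∈ B.verts := B.edge_vert hadj
  have hv : v ∈ B.verts := B.edge_vert hadj.symm
  have hne : u ≠ v := (B.adj_sub hadj).ne
  have hus : u ∈ σ.support := by rw [← hσ.support_coe] at hu; simpa using hu
  have hvs : v ∈ σ.support := by rw [← hσ.support_coe] at hv; simpa using hv
  have huv : u ∈ B.verts := B.edge_vert hadj
  have hvv : v ∈ B.verts := B.edge_vert hadj.symm
  have hmem_or : σ u = v ∨ σ v = u := by
    have hmem : v ∈ B.neighborSet u := hadj
    rw [hσ.neighborSet_eq hB huv] at hmem
    rcases hmem with h | h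
    · exact Or.inl h.symm
    · right; rw [h]; simp
  have hfil : ∀ i, i ∈ σ.support.filter (fun i => s(i, σ i) = s(u, v)) ↔
      ((i = u ∧ σ u = v) ∨ (i = v ∧ σ v = u)) := by
    intro i
    rw [Finset.mem_filter]
    constructor
    · rintro ⟨hi, he⟩
      rw [Sym2.eq_iff] at he
      rcases he with ⟨h1, h2⟩ | ⟨h1, h2⟩
      · exact Or.inl ⟨h1, by rw [← h1]; exact h2⟩
      · exact Or.inr ⟨h1, by rw [← h1]; exact h2⟩
    · rintro (⟨rfl, h⟩ | ⟨rfl, h⟩)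
      · exact ⟨hus, by rw [h]⟩
      · exact ⟨hvs, by rw [h, Sym2.eq_swap]⟩
  have hiso : (∀ x ∈ s(u,v), subDeg B x = 1) ↔ (σ u = v ∧ σ v = u) := by
    constructor
    · intro hP
      have hd1u : subDeg B u = 1 := hP u (Sym2.mem_mk_left u v)
      have hd1v : subDeg B v = 1 := hP v (Sym2.mem_mk_right u v)
      have hsqu := (hσ.deg_one_iff hB huv).mp hd1u
      have hsqv := (hσ.deg_one_iff hB hvv).mp hd1v
      rcases hmem_or with h | h
      · exact ⟨h, by rw [← h]; exact hsqu⟩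
      · exact ⟨by rw [← h]; exact hsqv, h⟩
    · rintro ⟨h1, h2⟩ x hx
      rw [Sym2.mem_iff] at hx
      rcases hx with rfl | rfl
      · exact (hσ.deg_one_iff hB huv).mpr (by rw [h1]; exact h2)
      · exact (hσ.deg_one_iff hB hvv).mpr (by rw [h2]; exact h1)
  by_cases hc : σ u = v ∧ σ v = u
  · rw [if_pos (hiso.mpr hc)]
    have hef : σ.support.filter (fun i => s(i, σ i) = s(u, v)) = {u, v} := by
      ext i
      rw [hfil i]
      simp [hc.1, hc.2]
    rw [hef, Finset.card_insert_of_notMem (by simpa using hne), Finset.card_singleton]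
  · rw [if_neg (fun hP => hc (hiso.mp hP))]
    rcases hmem_or with h | h
    · have h2 : σ v ≠ u := fun hcon => hc ⟨h, hcon⟩
      have hef : σ.support.filter (fun i => s(i, σ i) = s(u, v)) = {u} := by
        ext i
        rw [hfil i]
        simp [h, h2]
      rw [hef, Finset.card_singleton]
    · have h2 : σ u ≠ v := fun hcon => hc ⟨hcon, h⟩
      have hef : σ.support.filter (fun i => s(i, σ i) = s(u, v)) = {v} := by
        ext i
        rw [hfil i]
        simp [h, h2]
      rw [hef, Finset.card_singleton]

lemma Fib.prod_weight {F : Type*} [Field F] (w : Sym2 V → F)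
    (hB : IsElementarySubgraph B) (hσ : Fib B σ) :
    ∏ i ∈ σ.support, w s(i, σ i) = subgraphWeight w B * isolatedEdgesWeight w B := by
  classical
  have hEfin : B.edgeSet.Finite := Set.toFinite _
  have hmaps : ∀ i ∈ σ.support, s(i, σ i) ∈ hEfin.toFinset := by
    intro i hi
    rw [Set.Finite.mem_toFinset]
    refine SimpleGraph.Subgraph.mem_edgeSet.mpr (hσ.adj ?_)
    rw [← hσ.support_coe]
    simpa using hi
  rw [← Finset.prod_fiberwise_of_maps_to hmaps (fun i => w s(i, σ i))]
  have hstep : ∀ e ∈ hEfin.toFinset,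
      (∏ i ∈ σ.support.filter (fun i => s(i, σ i) = e), w s(i, σ i))
        = w e * (if (∀ x ∈ e, subDeg B x = 1) then w e else 1) := by
    intro e he
    rw [Set.Finite.mem_toFinset] at he
    induction e using Sym2.ind with
    | _ u v =>
    have hadj : B.Adj u v := SimpleGraph.Subgraph.mem_edgeSet.mp he
    have hconst : (∏ i ∈ σ.support.filter (fun i => s(i, σ i) = s(u,v)), w s(i, σ i))
        = w s(u,v) ^ (σ.support.filter (fun i => s(i, σ i) = s(u,v))).card := by
      rw [← Finset.prod_const]
      apply Finset.prod_congr rfl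
      intro i hi
      rw [(Finset.mem_filter.mp hi).2]
    rw [hconst, hσ.fiber_card hB hadj]
    by_cases hP : (∀ x ∈ s(u,v), subDeg B x = 1)
    · rw [if_pos hP, if_pos hP, pow_two]
    · rw [if_neg hP, if_neg hP, pow_one, mul_one]
  rw [Finset.prod_congr rfl hstep, Finset.prod_mul_distrib]
  congr 1
  · rw [subgraphWeight, finprod_mem_eq_finite_toFinset_prod _ hEfin]
  · rw [isolatedEdgesWeight,
      finprod_mem_eq_finite_toFinset_prod _ (Set.toFinite {e ∈ B.edgeSet | ∀ x ∈ e, subDeg B x = 1})]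
    rw [← Finset.prod_filter]
    apply Finset.prod_congr
    · ext e
      simp only [Set.Finite.mem_toFinset, Set.mem_setOf_eq, Finset.mem_filter]
    · intro e _
      rfl

lemma Fib.sign_eq {F : Type*} [Field F] (hB : IsElementarySubgraph B) (hσ : Fib B σ) :
    ((Equiv.Perm.sign σ : ℤ) : F) = (-1) ^ (σ.support.card + numComponents B) := by
  rw [hσ.numComponents_eq hB, Equiv.Perm.sign_of_cycleType]
  have hsum : σ.cycleType.sum = σ.support.card := Equiv.Perm.sum_cycleType σ
  have hcard : Multiset.card σ.cycleType = σ.cycleFactorsFinset.card := by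
    rw [Equiv.Perm.cycleType]
    simp
  rw [hsum, hcard]
  push_cast
  rfl

end Weights

lemma subgraph_finite : Finite G.Subgraph := by
  have hinj : Function.Injective (fun B : G.Subgraph => (B.verts, B.Adj)) := by
    intro B C h
    rw [Prod.mk.injEq] at h
    exact SimpleGraph.Subgraph.ext h.1 h.2
  exact Finite.of_injective _ hinj

end SachsAux

open SachsAux Equiv Equiv.Perm Polynomial in
/-- weighted Sachs formula. Let `(G, w)` be a weighted graph on `n`
vertices with nowhere-zero edge weights in a field.  The coefficient of `λ^k` in the
characteristic polynomial `φ(G,w;λ) = det(λI - A(G,w))`, i.e. `a_{n-k}`, equals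
`Σ_{B ∈ B_{n-k}(G)} (-1)^{κ(B)} · 2^{c(B)} · w(B) · w(B₂)`, the sum being over the
elementary subgraphs `B` of `G` of order `n - k`. -/
theorem weighted_sachs_formula {V : Type*} [Fintype V] [DecidableEq V] {F : Type*}
    [Field F] (G : SimpleGraph V) [DecidableRel G.Adj] (w : Sym2 V → F)
    (hw : ∀ e ∈ G.edgeSet, w e ≠ 0) (k : ℕ) (hk : k ≤ Fintype.card V) :
    (Matrix.of fun u v => if G.Adj u v then w s(u, v) else 0).charpoly.coeff k =
      ∑ᶠ B ∈ {B : G.Subgraph |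
          IsElementarySubgraph B ∧ B.verts.ncard = Fintype.card V - k},
        (-1 : F) ^ numComponents B * 2 ^ numCycles B *
          subgraphWeight w B * isolatedEdgesWeight w B := by
  classical
  set A : Matrix V V F := Matrix.of fun u v => if G.Adj u v then w s(u, v) else 0 with hA
  have hA0 : ∀ i, A i i = 0 := by
    intro i
    simp [hA]
  -- Step 1: permutation expansion of the coefficient
  have hcp : A.charpoly.coeff k = ∑ σ : Perm V, (if σ.support.card = Fintype.card V - k
      then ((Equiv.Perm.sign σ : ℤ) : F) * ∏ i ∈ σ.support, (-(A (σ i) i)) else 0) := by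
    rw [Matrix.charpoly, Matrix.det_apply, Polynomial.finset_sum_coeff]
    apply Finset.sum_congr rfl
    intro σ _
    have hprod : (∏ i, A.charmatrix (σ i) i)
        = Polynomial.C (∏ i ∈ σ.support, (-(A (σ i) i))) * Polynomial.X ^ (σ.supportᶜ.card) := by
      rw [← Finset.prod_mul_prod_compl σ.support]
      congr 1
      · rw [map_prod]
        apply Finset.prod_congr rfl
        intro i hi
        rw [Matrix.charmatrix_apply_ne _ _ _ (Equiv.Perm.mem_support.mp hi), map_neg]
      · rw [← Finset.prod_const]
        apply Finset.prod_congr rfl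
        intro i hi
        have hii : σ i = i := by
          rw [Finset.mem_compl, Equiv.Perm.notMem_support] at hi
          exact hi
        rw [hii, Matrix.charmatrix_apply_eq, hA0, map_zero, sub_zero]
    rw [hprod, Polynomial.coeff_smul, Polynomial.coeff_C_mul, Polynomial.coeff_X_pow]
    have hle : σ.support.card ≤ Fintype.card V := Finset.card_le_univ _
    have hd : σ.supportᶜ.card = Fintype.card V - σ.support.card := by
      rw [Finset.card_compl]
    by_cases hcond : σ.support.card = Fintype.card V - k
    · rw [if_pos hcond, if_pos (by omega), mul_one, Units.smul_def, zsmul_eq_mul]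
    · rw [if_neg hcond, if_neg (by omega), mul_zero, smul_zero]
  -- Step 2: restrict the sum to adjacency-compatible permutations
  set S' : Finset (Perm V) := Finset.univ.filter
    (fun σ : Perm V => σ.support.card = Fintype.card V - k ∧ MovesAdj G σ) with hS'
  have hcp2 : A.charpoly.coeff k = ∑ σ ∈ S',
      ((Equiv.Perm.sign σ : ℤ) : F) * ∏ i ∈ σ.support, (-(w s(i, σ i))) := by
    rw [hcp, ← Finset.sum_filter]
    have hsub : S' ⊆ Finset.univ.filter
        (fun σ : Perm V => σ.support.card = Fintype.card V - k) := by
      intro σ hσ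
      rw [hS', Finset.mem_filter] at hσ
      rw [Finset.mem_filter]
      exact ⟨hσ.1, hσ.2.1⟩
    rw [← Finset.sum_subset hsub ?hzero]
    · apply Finset.sum_congr rfl
      intro σ hσ
      rw [hS', Finset.mem_filter] at hσ
      congr 1
      apply Finset.prod_congr rfl
      intro i hi
      have hadj : G.Adj (σ i) i := hσ.2.2 i hi
      have : A (σ i) i = w s(i, σ i) := by
        simp only [hA, Matrix.of_apply, if_pos hadj]
        rw [Sym2.eq_swap]
      rw [this]
    case hzero =>
      intro σ hσ hnS
      rw [Finset.mem_filter] at hσ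
      rw [hS', Finset.mem_filter] at hnS
      push_neg at hnS
      have hnm : ¬ MovesAdj G σ := hnS (Finset.mem_univ σ) hσ.2
      rw [MovesAdj] at hnm
      push_neg at hnm
      obtain ⟨i, hi, hni⟩ := hnm
      have hzero : -(A (σ i) i) = 0 := by
        simp only [hA, Matrix.of_apply, if_neg hni]
        exact neg_zero
      rw [Finset.prod_eq_zero hi hzero, mul_zero]
  -- Step 3: rewrite each term via the associated subgraph
  have hterm : ∀ σ ∈ S', ((Equiv.Perm.sign σ : ℤ) : F) * ∏ i ∈ σ.support, (-(w s(i, σ i)))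
      = (-1 : F) ^ numComponents (perm2sub G σ) * (subgraphWeight w (perm2sub G σ) *
          isolatedEdgesWeight w (perm2sub G σ)) := by
    intro σ hσ
    rw [hS', Finset.mem_filter] at hσ
    obtain ⟨-, -, hmov⟩ := hσ
    have hfib := hmov.fib
    have helem := hmov.elementary
    have hneg : (∏ i ∈ σ.support, (-(w s(i, σ i))))
        = (-1 : F) ^ σ.support.card * ∏ i ∈ σ.support, w s(i, σ i) := by
      rw [← Finset.prod_const, ← Finset.prod_mul_distrib]
      apply Finset.prod_congr rfl
      intro i _
      rw [neg_one_mul]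
    rw [hneg, hfib.prod_weight w helem, Fib.sign_eq helem hfib]
    have hsupp : (perm2sub G σ).verts = ↑σ.support := rfl
    rw [← mul_assoc]
    congr 1
    rw [pow_add, mul_comm ((-1 : F) ^ σ.support.card), mul_assoc, ← pow_add]
    have heven : (-1 : F) ^ (σ.support.card + σ.support.card) = 1 :=
      Even.neg_one_pow ⟨σ.support.card, rfl⟩
    rw [heven, mul_one]
  -- Step 4: sum the fibers of perm2sub
  haveI : Finite G.Subgraph := subgraph_finite
  have hTfin : {B : G.Subgraph |
      IsElementarySubgraph B ∧ B.verts.ncard = Fintype.card V - k}.Finite := Set.toFinite _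
  have hmapsT : ∀ σ ∈ S', perm2sub G σ ∈ hTfin.toFinset := by
    intro σ hσ
    rw [hS', Finset.mem_filter] at hσ
    obtain ⟨-, hcard, hmov⟩ := hσ
    rw [Set.Finite.mem_toFinset, Set.mem_setOf_eq]
    refine ⟨hmov.elementary, ?_⟩
    rw [perm2sub_verts, Set.ncard_coe_finset]
    exact hcard
  have hfibcard : ∀ B ∈ hTfin.toFinset,
      (S'.filter (fun σ => perm2sub G σ = B)).card = 2 ^ numCycles B := by
    intro B hBT
    rw [Set.Finite.mem_toFinset, Set.mem_setOf_eq] at hBT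
    obtain ⟨hBelem, hBcard⟩ := hBT
    have hset : S'.filter (fun σ => perm2sub G σ = B)
        = Finset.univ.filter (fun τ => Fib B τ) := by
      ext τ
      simp only [hS', Finset.mem_filter, Finset.mem_univ, true_and]
      constructor
      · rintro ⟨⟨hcard, hmov⟩, heq⟩
        have hf := hmov.fib
        rw [heq] at hf
        exact hf
      · intro hfibτ
        refine ⟨⟨?_, hfibτ.movesAdj⟩, hfibτ.perm2sub_eq hBelem⟩
        calc τ.support.card = B.verts.ncard := by
              rw [← hfibτ.support_coe, Set.ncard_coe_finset]
        _ = Fintype.card V - k := hBcard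
    rw [hset]
    obtain ⟨σ₀, hσ₀⟩ := exists_fib (B.verts.ncard) B rfl hBelem
    have hcf := hσ₀.card_fiber hBelem
    have hsetf : {τ : Perm V | Fib B τ} = ↑(Finset.univ.filter fun τ => Fib B τ) := by
      ext τ; simp
    rw [hsetf, Set.ncard_coe_finset] at hcf
    exact hcf
  rw [hcp2, Finset.sum_congr rfl hterm,
    ← Finset.sum_fiberwise_of_maps_to hmapsT
      (fun σ => (-1 : F) ^ numComponents (perm2sub G σ) * (subgraphWeight w (perm2sub G σ) *
        isolatedEdgesWeight w (perm2sub G σ)))]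
  rw [finsum_mem_eq_finite_toFinset_sum _ hTfin]
  apply Finset.sum_congr rfl
  intro B hBT
  have hinner : (∑ σ ∈ S'.filter (fun σ => perm2sub G σ = B),
      (-1 : F) ^ numComponents (perm2sub G σ) * (subgraphWeight w (perm2sub G σ) *
        isolatedEdgesWeight w (perm2sub G σ)))
      = (S'.filter (fun σ => perm2sub G σ = B)).card •
          ((-1 : F) ^ numComponents B * (subgraphWeight w B * isolatedEdgesWeight w B)) := by
    rw [← Finset.sum_const]
    apply Finset.sum_congr rfl
    intro σ hσ
    rw [(Finset.mem_filter.mp hσ).2]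
  rw [hinner, hfibcard B hBT, nsmul_eq_mul]
  push_cast
  ring
end

section
/- Let Σ = (G, σ) be a signed graph with connected underlying simple graph G, and let w be a positive real-valued weight function on the edges of G. Let A(Σ,w) be the adjacency matrix with (u,v) entry σ(uv)·w(uv) for each edge uv and 0 otherwise, and A(G,w) the matrix with (u,v) entry w(uv) for edges and 0 otherwise. Then A(Σ,w) and A(G,w) are cospectral (have equal characteristic polynomials) if and only if Σ is balanced. -/
open SimpleGraph

/-- The sign (product of edge signs) of a walk in a graph, computed along its darts. -/
def walkSign {V : Type*} {G : SimpleGraph V} (σ : V → V → ℤ) {u v : V} (p : G.Walk u v) : ℤ :=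
  (p.darts.map fun d => σ d.toProd.1 d.toProd.2).prod

/-- `σ` is a signature on `G`: a symmetric function that is `±1`-valued on edges. -/
def IsSignature {V : Type*} (G : SimpleGraph V) (σ : V → V → ℤ) : Prop :=
  (∀ u v, σ u v = σ v u) ∧ ∀ u v, G.Adj u v → σ u v = 1 ∨ σ u v = -1

/-- A signed graph is balanced when every cycle has sign `+1`. -/
def IsBalanced {V : Type*} (G : SimpleGraph V) (σ : V → V → ℤ) : Prop :=
  ∀ (u : V) (p : G.Walk u u), p.IsCycle → walkSign σ p = 1

/-- A walk is a shortest path when it is a path whose length is the graph distance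
between its endpoints. -/
def IsShortestPath {V : Type*} {G : SimpleGraph V} {u v : V} (p : G.Walk u v) : Prop :=
  p.IsPath ∧ p.length = G.dist u v

open scoped Classical in
/-- `σmax u v = +1` if some shortest `u v`-path is positive, `-1` otherwise. -/
noncomputable def sigmaMax {V : Type*} (G : SimpleGraph V) (σ : V → V → ℤ) (u v : V) : ℤ :=
  if ∃ p : G.Walk u v, IsShortestPath p ∧ walkSign σ p = 1 then 1 else -1

open scoped Classical in
/-- `σmin u v = +1` if all shortest `u v`-paths are positive, `-1` otherwise. -/
noncomputable def sigmaMin {V : Type*} (G : SimpleGraph V) (σ : V → V → ℤ) (u v : V) : ℤ :=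
  if ∀ p : G.Walk u v, IsShortestPath p → walkSign σ p = 1 then 1 else -1

/-- The signed distance matrix `D^max`, with `(u,v)` entry `σmax(u,v)·d(u,v)`. -/
noncomputable def Dmax {V : Type*} (G : SimpleGraph V) (σ : V → V → ℤ) : Matrix V V ℝ :=
  Matrix.of fun u v => (sigmaMax G σ u v : ℝ) * (G.dist u v : ℝ)

/-- The signed distance matrix `D^min`, with `(u,v)` entry `σmin(u,v)·d(u,v)`. -/
noncomputable def Dmin {V : Type*} (G : SimpleGraph V) (σ : V → V → ℤ) : Matrix V V ℝ :=
  Matrix.of fun u v => (sigmaMin G σ u v : ℝ) * (G.dist u v : ℝ)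

/-- Two vertices are distance-compatible if all shortest paths between them have the
same sign. -/
def Compatible {V : Type*} (G : SimpleGraph V) (σ : V → V → ℤ) (u v : V) : Prop :=
  ∀ p q : G.Walk u v, IsShortestPath p → IsShortestPath q → walkSign σ p = walkSign σ q

/-- A signed graph is distance-compatible if every pair of vertices is
distance-compatible. -/
def IsCompatibleGraph {V : Type*} (G : SimpleGraph V) (σ : V → V → ℤ) : Prop :=
  ∀ u v, Compatible G σ u v

/-- The largest eigenvalue of a (symmetric) real matrix: the supremum of the set of real
roots of its characteristic polynomial. -/
noncomputable def largestEigenvalue {n : Type*} [Fintype n] [DecidableEq n]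
    (M : Matrix n n ℝ) : ℝ :=
  sSup {x : ℝ | M.charpoly.IsRoot x}

section WalkSignAux

variable {V : Type*} {G : SimpleGraph V}

lemma walkSign_nil (σ : V → V → ℤ) (u : V) : walkSign σ (Walk.nil : G.Walk u u) = 1 := rfl

lemma walkSign_cons (σ : V → V → ℤ) {u v w : V} (h : G.Adj u v) (p : G.Walk v w) :
    walkSign σ (Walk.cons h p) = σ u v * walkSign σ p := by
  simp [walkSign]

lemma walkSign_append (σ : V → V → ℤ) {u v w : V} (p : G.Walk u v) (q : G.Walk v w) :
    walkSign σ (p.append q) = walkSign σ p * walkSign σ q := by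
  simp [walkSign, Walk.darts_append]

lemma walkSign_concat (σ : V → V → ℤ) {u v w : V} (p : G.Walk u v) (h : G.Adj v w) :
    walkSign σ (p.concat h) = walkSign σ p * σ v w := by
  simp [walkSign, Walk.darts_concat]

lemma walkSign_reverse {σ : V → V → ℤ} (hσ : ∀ u v, σ u v = σ v u) {u v : V} (p : G.Walk u v) :
    walkSign σ p.reverse = walkSign σ p := by
  rw [walkSign, walkSign, Walk.darts_reverse, List.map_reverse, List.prod_reverse, List.map_map]
  apply congrArg
  apply List.map_congr_left
  intro d _
  simp only [Function.comp_apply, Dart.symm_toProd, Prod.fst_swap, Prod.snd_swap]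
  exact (hσ _ _).symm

lemma walkSign_pm {σ : V → V → ℤ} (hσ : IsSignature G σ) {u v : V} (p : G.Walk u v) :
    walkSign σ p = 1 ∨ walkSign σ p = -1 := by
  induction p with
  | nil => left; rfl
  | cons h q ih =>
    rw [walkSign_cons]
    rcases hσ.2 _ _ h with h1 | h1 <;> rcases ih with h2 | h2 <;> rw [h1, h2] <;> norm_num

lemma eq_single_of_edge_mem {u v : V} :
    ∀ (p : G.Walk u v), p.IsPath → s(u, v) ∈ p.edges →
      ∃ h : G.Adj u v, p = Walk.cons h Walk.nil := by
  intro p hp he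
  cases p with
  | nil => simp at he
  | @cons _ x _ h t =>
    rw [Walk.edges_cons, List.mem_cons] at he
    rcases he with he | he
    · rcases Sym2.eq_iff.mp he with ⟨-, rfl⟩ | ⟨h1, h2⟩
      · have ht : t = Walk.nil := Walk.isPath_iff_eq_nil.mp hp.of_cons
        subst ht
        exact ⟨h, rfl⟩
      · exact absurd h1 h.ne
    · have hmem : u ∈ t.support := Walk.fst_mem_support_of_mem_edges t he
      rw [Walk.cons_isPath_iff] at hp
      exact absurd hmem hp.2


lemma exists_neg_cycle {σ : V → V → ℤ} (hσ : IsSignature G σ) :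
    ∀ (n : ℕ) (u : V) (p : G.Walk u u), p.length ≤ n → walkSign σ p ≠ 1 →
      ∃ (x : V) (c : G.Walk x x), c.IsCycle ∧ walkSign σ c ≠ 1 := by
  intro n
  induction n with
  | zero =>
    intro u p hl hs
    have h0 : p.length = 0 := Nat.le_zero.mp hl
    have hnil : p = Walk.nil := Walk.nil_iff_eq_nil.mp (Walk.nil_iff_length_eq.mpr h0)
    exact absurd (by rw [hnil]; rfl) hs
  | succ n ih =>
    intro u p hl hs
    cases p with
    | nil => exact absurd rfl hs
    | @cons _ v _ h q =>
      by_cases hd : q.support.Nodup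
      · have hq : q.IsPath := Walk.IsPath.mk' hd
        by_cases he : s(v, u) ∈ q.edges
        · obtain ⟨h', hq1⟩ := eq_single_of_edge_mem q hq he
          subst hq1
          refine absurd ?_ hs
          rw [walkSign_cons, walkSign_cons, walkSign_nil, mul_one, hσ.1 v u]
          rcases hσ.2 u v h with h1 | h1 <;> rw [h1] <;> norm_num
        · refine ⟨u, Walk.cons h q, (Walk.cons_isCycle_iff q h).mpr ⟨hq, ?_⟩, hs⟩
          rwa [Sym2.eq_swap] at he
      · classical
        rw [List.nodup_iff_count_le_one] at hd
        push_neg at hd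
        obtain ⟨x, hx2⟩ := hd
        have hx : x ∈ q.support := List.count_pos_iff.mp (by omega)
        have hq1 := q.take_spec hx
        have hc1 : (q.takeUntil x hx).support.count x = 1 :=
          q.count_support_takeUntil_eq_one hx
        have hcnt : q.support.count x =
            (q.takeUntil x hx).support.count x + (q.dropUntil x hx).support.tail.count x := by
          conv_lhs => rw [← hq1]
          rw [Walk.support_append, List.count_append]
        have hx3 : x ∈ (q.dropUntil x hx).support.tail := by
          apply List.count_pos_iff.mp
          omega
        have hnn : ¬ (q.dropUntil x hx).Nil := by
          intro hnil
          have hl0 : (q.dropUntil x hx).length = 0 := Walk.nil_iff_length_eq.mp hnil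
          have hsup := (q.dropUntil x hx).length_support
          have : (q.dropUntil x hx).support.tail = [] := by
            apply List.eq_nil_of_length_eq_zero
            rw [List.length_tail, hsup, hl0]
          rw [this] at hx3
          simp at hx3
        obtain ⟨y, h2, r3, hr3⟩ := Walk.not_nil_iff.mp hnn
        have hx4 : x ∈ r3.support := by
          rw [hr3] at hx3
          simpa using hx3
        have hr3spec := r3.take_spec hx4
        -- new walks
        set pnew : G.Walk u u := Walk.cons h ((q.takeUntil x hx).append (r3.dropUntil x hx4))
          with hpnew
        set dwalk : G.Walk x x := Walk.cons h2 (r3.takeUntil x hx4) with hdwalk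
        have hsign : walkSign σ (Walk.cons h q) = walkSign σ pnew * walkSign σ dwalk := by
          conv_lhs => rw [walkSign_cons, ← hq1, walkSign_append, hr3, walkSign_cons,
            ← hr3spec, walkSign_append]
          rw [hpnew, hdwalk, walkSign_cons, walkSign_append, walkSign_cons]
          ring
        have hlen : pnew.length + dwalk.length = q.length + 1 := by
          have e1 : q.length = (q.takeUntil x hx).length + (q.dropUntil x hx).length := by
            conv_lhs => rw [← hq1]
            rw [Walk.length_append]
          have e2 : (q.dropUntil x hx).length = 1 + r3.length := by
            rw [hr3, Walk.length_cons]; omega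
          have e3 : r3.length = (r3.takeUntil x hx4).length + (r3.dropUntil x hx4).length := by
            conv_lhs => rw [← hr3spec]
            rw [Walk.length_append]
          rw [hpnew, hdwalk]
          simp only [Walk.length_cons, Walk.length_append]
          omega
        have hql : q.length ≤ n := by
          have := Walk.length_cons h q
          omega
        by_cases hs1 : walkSign σ dwalk = 1
        · have hsp : walkSign σ pnew ≠ 1 := by
            intro hh; rw [hh, hs1, mul_one] at hsign; exact hs (hsign)
          refine ih u pnew ?_ hsp
          have h1d : 1 ≤ dwalk.length := by rw [hdwalk, Walk.length_cons]; omega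
          omega
        · refine ih x dwalk ?_ hs1
          have h1p : 1 ≤ pnew.length := by rw [hpnew, Walk.length_cons]; omega
          omega

lemma closed_walk_sign_one {σ : V → V → ℤ} (hσ : IsSignature G σ) (hb : IsBalanced G σ)
    (u : V) (p : G.Walk u u) : walkSign σ p = 1 := by
  by_contra hs
  obtain ⟨x, c, hc, hcs⟩ := exists_neg_cycle hσ p.length u p le_rfl hs
  exact hcs (hb x c hc)

lemma walks_same_sign {σ : V → V → ℤ} (hσ : IsSignature G σ) (hb : IsBalanced G σ)
    {a b : V} (p q : G.Walk a b) : walkSign σ p = walkSign σ q := by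
  have h1 := closed_walk_sign_one hσ hb a (p.append q.reverse)
  rw [walkSign_append, walkSign_reverse hσ.1] at h1
  rcases walkSign_pm hσ q with h2 | h2 <;> rcases walkSign_pm hσ p with h3 | h3 <;>
    rw [h3, h2] at h1 ⊢ <;> norm_num at h1

end WalkSignAux

section MatrixAux
open Polynomial

variable {n R : Type*} [Fintype n] [DecidableEq n]

lemma charpoly_conj [CommRing R] (P A Q : Matrix n n R) (h : P * Q = 1) :
    (P * A * Q).charpoly = A.charpoly := by
  have hmapone : (1 : Matrix n n R).map (C : R → R[X]) = 1 :=
    Matrix.map_one _ (map_zero C) (map_one C)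
  have key : Matrix.charmatrix (P * A * Q) =
      P.map C * Matrix.charmatrix A * Q.map C := by
    rw [Matrix.charmatrix, Matrix.charmatrix, RingHom.mapMatrix_apply, RingHom.mapMatrix_apply,
      Matrix.mul_sub, Matrix.sub_mul]
    congr 1
    · rw [← Matrix.scalar_commute (X : R[X]) (Commute.all X) (P.map C), mul_assoc,
        ← Matrix.map_mul, h, hmapone, Matrix.mul_one]
    · rw [← Matrix.map_mul, ← Matrix.map_mul]
  have hdet : (P.map (C : R → R[X])).det * (Q.map (C : R → R[X])).det = 1 := by
    rw [← Matrix.det_mul, ← Matrix.map_mul, h, hmapone, Matrix.det_one]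
  rw [Matrix.charpoly, Matrix.charpoly, key, Matrix.det_mul, Matrix.det_mul]
  calc (P.map C).det * (Matrix.charmatrix A).det * (Q.map C).det
      = (Matrix.charmatrix A).det * ((P.map C).det * (Q.map C).det) := by ring
    _ = (Matrix.charmatrix A).det := by rw [hdet, mul_one]

lemma conj_pow_eq [CommRing R] (P A Q : Matrix n n R) (hPQ : P * Q = 1) (hQP : Q * P = 1)
    (k : ℕ) : (P * A * Q) ^ k = P * A ^ k * Q := by
  induction k with
  | zero => rw [pow_zero, pow_zero, Matrix.mul_one, hPQ]
  | succ k ih =>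
    rw [pow_succ, ih, pow_succ]
    simp only [mul_assoc]
    rw [← mul_assoc Q P, hQP, one_mul]

lemma hermitian_charpoly_trace (A : Matrix n n ℝ) (hA : A.IsHermitian) :
    ∃ e : n → ℝ, A.charpoly = ∏ i, (X - C (e i)) ∧
      ∀ k, (A ^ k).trace = ∑ i, e i ^ k := by
  have hspec := hA.spectral_theorem
  rw [Unitary.conjStarAlgAut_apply] at hspec
  set U : Matrix n n ℝ := (Matrix.IsHermitian.eigenvectorUnitary hA : Matrix n n ℝ) with hU
  set e : n → ℝ := RCLike.ofReal ∘ hA.eigenvalues with he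
  have hmem := (Matrix.IsHermitian.eigenvectorUnitary hA).2
  have hU1 : U * star U = 1 := Matrix.mem_unitaryGroup_iff.mp hmem
  have hU2 : star U * U = 1 := Matrix.mem_unitaryGroup_iff'.mp hmem
  refine ⟨e, ?_, ?_⟩
  · rw [hspec, charpoly_conj _ _ _ hU1, Matrix.charpoly]
    have hcm : Matrix.charmatrix (Matrix.diagonal e) =
        Matrix.diagonal (fun i => X - C (e i)) := by
      apply Matrix.ext
      intro i j
      by_cases hij : i = j
      · subst hij; simp [Matrix.charmatrix_apply_eq]
      · rw [Matrix.charmatrix_apply_ne _ _ _ hij, Matrix.diagonal_apply_ne _ hij,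
          Matrix.diagonal_apply_ne _ hij, map_zero, neg_zero]
    rw [hcm, Matrix.det_diagonal]
  · intro k
    rw [hspec, conj_pow_eq _ _ _ hU1 hU2, Matrix.trace_mul_cycle, hU2, one_mul,
      Matrix.diagonal_pow, Matrix.trace_diagonal]
    simp [Pi.pow_apply]

lemma trace_pow_eq_of_charpoly {A B : Matrix n n ℝ} (hA : A.IsHermitian) (hB : B.IsHermitian)
    (h : A.charpoly = B.charpoly) (k : ℕ) : (A ^ k).trace = (B ^ k).trace := by
  obtain ⟨e, he1, he2⟩ := hermitian_charpoly_trace A hA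
  obtain ⟨f, hf1, hf2⟩ := hermitian_charpoly_trace B hB
  have h1 : ∀ g : n → ℝ, ∏ i, (X - C (g i)) =
      ((Finset.univ.val.map g).map fun a => X - C a).prod := by
    intro g; rw [Finset.prod, Multiset.map_map]; rfl
  have hprod : ∏ i, (X - C (e i)) = ∏ i, (X - C (f i)) := by rw [← he1, ← hf1, h]
  have hmult : (Finset.univ.val.map e) = (Finset.univ.val.map f) := by
    have hr := congrArg Polynomial.roots hprod
    rwa [h1 e, h1 f, Polynomial.roots_multiset_prod_X_sub_C,
      Polynomial.roots_multiset_prod_X_sub_C] at hr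
  have h2 : ∀ g : n → ℝ, ∑ i, g i ^ k = ((Finset.univ.val.map g).map (· ^ k)).sum := by
    intro g; rw [Finset.sum, Multiset.map_map]; rfl
  rw [he2, hf2, h2, h2, hmult]

end MatrixAux

def chainProd {V : Type*} (M : Matrix V V ℝ) : V → List V → V → ℝ
  | u, [], v => M u v
  | u, a :: l, v => M u a * chainProd M a l v

lemma chainProd_cons {V : Type*} (M : Matrix V V ℝ) (u a v : V) (l : List V) :
    chainProd M u (a :: l) v = M u a * chainProd M a l v := rfl

lemma pow_succ_apply {V : Type*} [Fintype V] [DecidableEq V] (M : Matrix V V ℝ) :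
    ∀ (k : ℕ) (u v : V), (M ^ (k + 1)) u v = ∑ f : Fin k → V, chainProd M u (List.ofFn f) v := by
  intro k
  induction k with
  | zero =>
    intro u v
    haveI : Unique (Fin 0 → V) := ⟨⟨fun i => i.elim0⟩, fun f => funext fun i => i.elim0⟩
    rw [Fintype.sum_unique]
    simp only [zero_add, pow_one, List.ofFn_zero]
    rfl
  | succ k ih =>
    intro u v
    rw [pow_succ', Matrix.mul_apply]
    rw [← Equiv.sum_comp (Fin.consEquiv (fun _ : Fin (k+1) => V))
      (fun f => chainProd M u (List.ofFn f) v), Fintype.sum_prod_type]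
    apply Finset.sum_congr rfl
    intro a _
    rw [ih a v, Finset.mul_sum]
    apply Finset.sum_congr rfl
    intro f _
    have hofn : List.ofFn ((Fin.consEquiv (fun _ : Fin (k+1) => V)) (a, f)) =
        a :: List.ofFn f := by
      rw [List.ofFn_succ]
      simp [Fin.consEquiv]
    rw [hofn, chainProd_cons]

lemma trace_pow_eq_sum_chain {V : Type*} [Fintype V] [DecidableEq V] (M : Matrix V V ℝ)
    (k : ℕ) : (M ^ (k + 1)).trace = ∑ u : V, ∑ f : Fin k → V, chainProd M u (List.ofFn f) u := by
  rw [Matrix.trace]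
  apply Finset.sum_congr rfl
  intro u _
  exact pow_succ_apply M k u u

lemma chainProd_eq_darts {V : Type*} {G : SimpleGraph V} (M : Matrix V V ℝ) :
    ∀ {a b : V} (p : G.Walk a b), ¬ p.Nil →
      chainProd M a p.support.tail.dropLast b =
        (p.darts.map fun d => M d.toProd.1 d.toProd.2).prod := by
  intro a b p
  induction p with
  | nil => intro h; simp at h
  | @cons _ c _ hadj q ih =>
    intro _
    cases q with
    | nil => simp [chainProd]
    | @cons _ y _ h' q' =>
      have hrec := ih (Walk.not_nil_cons)
      simp only [Walk.support_cons, List.tail_cons, Walk.darts_cons, List.map_cons,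
        List.prod_cons] at hrec ⊢
      rw [Walk.support_eq_cons q', List.dropLast_cons₂, ← Walk.support_eq_cons q',
        chainProd_cons, hrec]

lemma list_prod_pos : ∀ (l : List ℝ), (∀ x ∈ l, 0 < x) → 0 < l.prod := by
  intro l
  induction l with
  | nil => intro _; simp
  | cons a t ih =>
    intro h
    rw [List.prod_cons]
    exact mul_pos (h a List.mem_cons_self) (ih fun x hx => h x (List.mem_cons_of_mem _ hx))

lemma ofFn_of_length {α : Type*} : ∀ (l : List α) (m : ℕ) (h : l.length = m),
    List.ofFn (fun i : Fin m => l.get (Fin.cast h.symm i)) = l := by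
  intro l m h
  subst h
  simp [List.ofFn_get l]

/-- Acharya's theorem, weighted form. For a signed graph `(G, σ)` with
connected underlying simple graph and a positive edge-weight function `w`, the weighted
signed adjacency matrix `A(Σ,w)` is cospectral with the weighted adjacency matrix
`A(G,w)` if and only if the signed graph is balanced. -/
theorem weighted_cospectral_iff_balanced {V : Type*} [Fintype V] [DecidableEq V]
    (G : SimpleGraph V) [DecidableRel G.Adj] (σ : V → V → ℤ) (w : V → V → ℝ)
    (hσ : IsSignature G σ) (hG : G.Connected)
    (hwsym : ∀ u v, w u v = w v u) (hwpos : ∀ u v, G.Adj u v → 0 < w u v) :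
    (Matrix.of fun u v => if G.Adj u v then (σ u v : ℝ) * w u v else 0).charpoly =
      (Matrix.of fun u v => if G.Adj u v then w u v else 0).charpoly ↔
    IsBalanced G σ := by
  classical
  set S : Matrix V V ℝ := Matrix.of fun u v => if G.Adj u v then (σ u v : ℝ) * w u v else 0
    with hS
  set W : Matrix V V ℝ := Matrix.of fun u v => if G.Adj u v then w u v else 0 with hW
  have hsymS : ∀ a b, S a b = S b a := by
    intro a b
    by_cases hab : G.Adj a b
    · simp [hS, hab, hab.symm, hσ.1 a b, hwsym a b]
    · have hba : ¬ G.Adj b a := fun hh => hab hh.symm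
      simp [hS, hab, hba]
  have hsymW : ∀ a b, W a b = W b a := by
    intro a b
    by_cases hab : G.Adj a b
    · simp [hW, hab, hab.symm, hwsym a b]
    · have hba : ¬ G.Adj b a := fun hh => hab hh.symm
      simp [hW, hab, hba]
  have hermS : S.IsHermitian := by
    apply Matrix.ext
    intro i j
    rw [Matrix.conjTranspose_apply, star_trivial]
    exact hsymS j i
  have hermW : W.IsHermitian := by
    apply Matrix.ext
    intro i j
    rw [Matrix.conjTranspose_apply, star_trivial]
    exact hsymW j i
  constructor
  · -- cospectral → balanced
    intro hchar u c hc
    by_contra hne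
    have hsgn : walkSign σ c = -1 := (walkSign_pm hσ c).resolve_left hne
    have h3 := hc.three_le_length
    have habs : ∀ a b, |S a b| = W a b := by
      intro a b
      by_cases hab : G.Adj a b
      · rcases hσ.2 a b hab with h1 | h1 <;>
          simp [hS, hW, hab, h1, abs_of_pos (hwpos a b hab), abs_of_neg]
      · simp [hS, hW, hab]
    have chainAbs : ∀ (l : List V) (a b : V), |chainProd S a l b| = chainProd W a l b := by
      intro l
      induction l with
      | nil => intro a b; exact habs a b
      | cons x t ih =>
        intro a b
        rw [chainProd_cons, chainProd_cons, abs_mul, habs, ih]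
    have chainLe : ∀ (l : List V) (a b : V), chainProd S a l b ≤ chainProd W a l b := by
      intro l a b
      rw [← chainAbs l a b]
      exact le_abs_self _
    set k := c.length - 1 with hk
    have hkk : c.length = k + 1 := by omega
    have htr := trace_pow_eq_of_charpoly hermS hermW hchar (k + 1)
    rw [trace_pow_eq_sum_chain, trace_pow_eq_sum_chain] at htr
    have hinner_le : ∀ x ∈ Finset.univ, (∑ f : Fin k → V, chainProd S x (List.ofFn f) x) ≤
        ∑ f : Fin k → V, chainProd W x (List.ofFn f) x := by
      intro x _
      exact Finset.sum_le_sum fun f _ => chainLe _ _ _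
    have houter := (Finset.sum_eq_sum_iff_of_le hinner_le).mp htr
    have hterm := (Finset.sum_eq_sum_iff_of_le
      (fun (f : Fin k → V) _ => chainLe (List.ofFn f) u u)).mp
      (houter u (Finset.mem_univ u))
    set l : List V := c.support.tail.dropLast with hldef
    have hlen : l.length = k := by
      rw [hldef, List.length_dropLast, List.length_tail, c.length_support]
      omega
    have heq := hterm (fun i : Fin k => l.get (Fin.cast hlen.symm i)) (Finset.mem_univ _)
    rw [ofFn_of_length l k hlen] at heq
    have hnotnil : ¬ c.Nil := by rw [Walk.nil_iff_length_eq]; omega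
    have hcs := chainProd_eq_darts (G := G) S c hnotnil
    have hcw := chainProd_eq_darts (G := G) W c hnotnil
    have hWprod_pos : 0 < (c.darts.map fun d => W d.toProd.1 d.toProd.2).prod := by
      apply list_prod_pos
      intro x hx
      obtain ⟨d, _, rfl⟩ := List.mem_map.mp hx
      simpa [hW, d.adj] using hwpos _ _ d.adj
    have hSprod : (c.darts.map fun d => S d.toProd.1 d.toProd.2).prod =
        ((walkSign σ c : ℤ) : ℝ) * (c.darts.map fun d => W d.toProd.1 d.toProd.2).prod := by
      have hmapeq : (c.darts.map fun d => S d.toProd.1 d.toProd.2) =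
          c.darts.map (fun d => ((σ d.toProd.1 d.toProd.2 : ℤ) : ℝ) *
            W d.toProd.1 d.toProd.2) := by
        apply List.map_congr_left
        intro d _
        simp [hS, hW, d.adj]
      rw [hmapeq, List.prod_map_mul]
      congr 1
      rw [walkSign, Int.cast_list_prod, List.map_map]
      rfl
    rw [hcs, hSprod, hsgn, hcw] at heq
    push_cast at heq
    nlinarith [hWprod_pos]
  · -- balanced → cospectral
    intro hb
    obtain ⟨r⟩ := hG.nonempty
    have hwalk : ∀ v, Nonempty (G.Walk r v) := fun v => hG.preconnected r v
    set θ : V → ℤ := fun v => walkSign σ (Classical.choice (hwalk v)) with hθ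
    have hθpm : ∀ v, θ v = 1 ∨ θ v = -1 := fun v => walkSign_pm hσ _
    have hθadj : ∀ a b, G.Adj a b → (σ a b : ℝ) = (θ a : ℝ) * (θ b : ℝ) := by
      intro a b hab
      have h1 : walkSign σ (Classical.choice (hwalk b)) =
          walkSign σ ((Classical.choice (hwalk a)).concat hab) :=
        walks_same_sign hσ hb _ _
      rw [walkSign_concat] at h1
      have hθa : θ a = walkSign σ (Classical.choice (hwalk a)) := rfl
      have hθb : θ b = walkSign σ (Classical.choice (hwalk b)) := rfl
      have : σ a b = θ a * θ b := by
        rw [hθa, hθb, h1]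
        rcases walkSign_pm hσ (Classical.choice (hwalk a)) with h2 | h2 <;> rw [h2] <;> ring
      rw [this]
      push_cast
      ring
    set D : Matrix V V ℝ := Matrix.diagonal (fun v => (θ v : ℝ)) with hD
    have hDD : D * D = 1 := by
      apply Matrix.ext
      intro i j
      rw [hD, Matrix.diagonal_mul_diagonal]
      by_cases hij : i = j
      · subst hij
        rw [Matrix.diagonal_apply_eq, Matrix.one_apply_eq]
        rcases hθpm i with h1 | h1 <;> rw [h1] <;> norm_num
      · rw [Matrix.diagonal_apply_ne _ hij, Matrix.one_apply_ne hij]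
    have hSDW : S = D * W * D := by
      apply Matrix.ext
      intro a b
      rw [hD, Matrix.mul_diagonal, Matrix.diagonal_mul]
      by_cases hab : G.Adj a b
      · simp only [hS, hW, Matrix.of_apply, if_pos hab]
        rw [hθadj a b hab]
        ring
      · simp [hS, hW, hab]
    rw [hSDW, charpoly_conj D W D hDD]
end
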